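/- arXiv:2304.05589 — 8 statements merged into one kernel-verified Lean document; each statement's English description precedes it below -/
import Mathlib

section
/- Let G : ℝ^k → ℝ^n be continuously differentiable and injective, and let p_Z and q be probability measures on ℝ^k that are absolutely continuous with respect to Lebesgue measure, with q absolutely continuous with respect to p_Z. Let h = G♯q and P = G♯p_Z denote the push-forward measures on ℝ^n. Then the Kullback–Leibler divergence is preserved under the push-forward: KL(h ‖ P) = KL(q ‖ p_Z), i.e. ∫ log(dh/dP)(x) dh(x) = ∫ log(dq/dp_Z)(z) dq(z). Consequently, for every measurable likelihood function x ↦ p(y|x), the quantity E_{x∼h}[log p(y|x) + log(dP/dh)(x)] equals E_{z∼q}[log p(y|G(z)) + log(dp_Z/dq)(z)]; that is, the ELBO of the push-forward model equals the ELBOProxy computed in the latent space (Proposition on ELBOProxy equivalence). -/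
open MeasureTheory

/-- **ELBOProxy equivalence (Proposition).**
For a continuously differentiable injective `G : ℝᵏ → ℝⁿ` and probability measures
`pZ, q` on `ℝᵏ` absolutely continuous w.r.t. Lebesgue measure with `q ≪ pZ`,
the KL divergence is preserved under the push-forward `h = G♯q`, `P = G♯pZ`,
and consequently the ELBO of the push-forward model equals the ELBOProxy
computed in the latent space. -/
theorem stmt0 {k n : ℕ}
    (G : (Fin k → ℝ) → (Fin n → ℝ)) (hG : ContDiff ℝ 1 G) (hGinj : Function.Injective G)
    (pZ q : Measure (Fin k → ℝ)) [IsProbabilityMeasure pZ] [IsProbabilityMeasure q]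
    (hpZac : pZ ≪ volume) (hqac : q ≪ volume) (hqp : q ≪ pZ)
    (h P : Measure (Fin n → ℝ)) (hh : h = q.map G) (hP : P = pZ.map G) :
    (∫ x, Real.log ((h.rnDeriv P x).toReal) ∂h
        = ∫ z, Real.log ((q.rnDeriv pZ z).toReal) ∂q)
    ∧ ∀ f : (Fin n → ℝ) → ℝ, Measurable f → (∀ x, 0 ≤ f x) →
        ∫ x, (Real.log (f x) + Real.log ((P.rnDeriv h x).toReal)) ∂h
          = ∫ z, (Real.log (f (G z)) + Real.log ((pZ.rnDeriv q z).toReal)) ∂q := by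
  have hGemb : MeasurableEmbedding G := hG.continuous.measurableEmbedding hGinj
  subst hh hP
  constructor
  · rw [hGemb.integral_map]
    refine integral_congr_ae ?_
    filter_upwards [hqp.ae_le (hGemb.rnDeriv_map q pZ)] with z hz
    rw [hz]
  · intro f _ _
    rw [hGemb.integral_map]
    refine integral_congr_ae ?_
    filter_upwards [hGemb.rnDeriv_map pZ q] with z hz
    rw [hz]
end

section
/- Fix σ > 0, y ∈ ℝ^m, A ∈ ℝ^{m×n}, G ∈ ℝ^{n×k}, μ ∈ ℝ^k, and an invertible matrix U ∈ ℝ^{k×k}. Then the negative ELBOProxy for a Gaussian variational family admits the closed form: ∫ [ (1/(2σ²))‖y − A G (U z + μ)‖² + (1/2)‖U z + μ‖² + ℓ(U z + μ) ] dγ_k(z) = (1/(2σ²))(‖y‖² + ‖A G U‖_F² + ‖A G μ‖²) − (1/σ²)⟨y, A G μ⟩ + (1/2)(‖U‖_F² + ‖μ‖²) − log|det U| − k/2 − (k/2)·log(2π), where ℓ(v) := −(1/2)(v−μ)ᵀ(U Uᵀ)⁻¹(v−μ) − (k/2)·log(2π) − (1/2)·log|det(U Uᵀ)| is the log-density of the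 Gaussian N(μ, U Uᵀ) (Proposition: closed form of the linear-IGM loss). -/
open MeasureTheory ProbabilityTheory Matrix

/-- The standard Gaussian measure on `ℝᵏ` (product of `k` copies of `N(0,1)`). -/
noncomputable def stdGaussian (k : ℕ) : Measure (Fin k → ℝ) :=
  Measure.pi fun _ => gaussianReal 0 1

namespace StdGaussianAux

open Real Set

/-! ### Moments of the one-dimensional standard Gaussian -/

lemma gaussian_pdf_eq (x : ℝ) : gaussianPDFReal 0 1 x
    = (Real.sqrt (2*π))⁻¹ * Real.exp (-(1/2) * x^2) := by
  simp only [gaussianPDFReal, NNReal.coe_one, mul_one, sub_zero]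
  ring_nf

lemma integral_gaussianReal_transfer (g : ℝ → ℝ) :
    ∫ x, g x ∂(gaussianReal 0 1) = ∫ x, gaussianPDFReal 0 1 x * g x := by
  rw [gaussianReal_of_var_ne_zero 0 one_ne_zero, gaussianPDF_def]
  rw [show (fun x => ENNReal.ofReal (gaussianPDFReal 0 1 x))
      = (fun x => ((gaussianPDFReal 0 1 x).toNNReal : ENNReal)) from rfl]
  rw [integral_withDensity_eq_integral_smul
    ((measurable_gaussianPDFReal 0 1).real_toNNReal) g]
  congr 1; ext x
  simp [NNReal.smul_def, Real.coe_toNNReal _ (gaussianPDFReal_nonneg 0 1 x)]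

lemma integrable_gaussianReal_transfer (g : ℝ → ℝ)
    (h : Integrable (fun x => g x * gaussianPDFReal 0 1 x)) :
    Integrable g (gaussianReal 0 1) := by
  rw [gaussianReal_of_var_ne_zero 0 one_ne_zero, gaussianPDF_def]
  rw [integrable_withDensity_iff (measurable_gaussianPDFReal 0 1).ennreal_ofReal
    (Filter.Eventually.of_forall fun x => ENNReal.ofReal_lt_top)]
  refine h.congr (Filter.Eventually.of_forall fun x => ?_)
  simp [ENNReal.toReal_ofReal (gaussianPDFReal_nonneg 0 1 x)]

lemma stdg_integrable_id : Integrable (fun x : ℝ => x) (gaussianReal 0 1) := by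
  refine integrable_gaussianReal_transfer _ ?_
  have := (integrable_mul_exp_neg_mul_sq (by norm_num : (0:ℝ) < 1/2)).const_mul
    ((Real.sqrt (2*π))⁻¹)
  refine this.congr (Filter.Eventually.of_forall fun x => ?_)
  simp only [gaussian_pdf_eq]; ring

lemma rpow_two_eq (x : ℝ) : x ^ (2:ℝ) = x ^ 2 := by
  rw [show ((2:ℝ)) = ((2:ℕ):ℝ) by norm_num, Real.rpow_natCast]

lemma stdg_integrable_sq : Integrable (fun x : ℝ => x^2) (gaussianReal 0 1) := by
  refine integrable_gaussianReal_transfer _ ?_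
  have := (integrable_rpow_mul_exp_neg_mul_sq (by norm_num : (0:ℝ) < 1/2)
    (by norm_num : (-1:ℝ) < 2)).const_mul ((Real.sqrt (2*π))⁻¹)
  refine this.congr (Filter.Eventually.of_forall fun x => ?_)
  simp only [rpow_two_eq, gaussian_pdf_eq]; ring

lemma stdg_integral_id : ∫ x, x ∂(gaussianReal 0 1) = 0 := by
  rw [integral_gaussianReal_transfer]
  simp only [gaussian_pdf_eq]
  have : ∀ x : ℝ, (Real.sqrt (2*π))⁻¹ * Real.exp (-(1/2) * x^2) * x
      = (Real.sqrt (2*π))⁻¹ * (x * Real.exp (-(1/2) * x^2)) := fun x => by ring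
  simp only [this]
  rw [integral_const_mul]
  have h0 : ∫ x : ℝ, x * Real.exp (-(1/2) * x^2) = 0 := by
    have hmp := Measure.measurePreserving_neg (volume : Measure ℝ)
    have h2 := hmp.integral_comp (Homeomorph.neg ℝ).measurableEmbedding
      (fun y : ℝ => y * Real.exp (-(1/2) * y^2))
    simp only [Function.comp, neg_sq, neg_mul] at h2
    rw [integral_neg] at h2
    have h3 : ∀ y : ℝ, -(1/2) * y^2 = -(1/2 * y^2) := fun y => by ring
    simp only [h3]
    linarith
  rw [h0, mul_zero]

lemma integrable_sq_gauss_kernel :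
    Integrable (fun x : ℝ => x^2 * Real.exp (-(1/2) * x^2)) := by
  have := integrable_rpow_mul_exp_neg_mul_sq (by norm_num : (0:ℝ) < 1/2)
    (by norm_num : (-1:ℝ) < 2)
  refine this.congr (Filter.Eventually.of_forall fun x => ?_)
  simp only [rpow_two_eq]

lemma integral_Ioi_sq_gauss :
    ∫ x in Ioi (0:ℝ), x^2 * Real.exp (-(1/2) * x^2) = Real.sqrt (2*π) / 2 := by
  have h := integral_rpow_mul_exp_neg_mul_rpow (p := 2) (q := 2) (b := 1/2)
    (by norm_num) (by norm_num) (by norm_num)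
  simp only [rpow_two_eq] at h
  rw [h]
  have hg : Real.Gamma ((2+1)/2) = Real.sqrt π / 2 := by
    rw [show ((2+1)/2 : ℝ) = 1/2 + 1 by norm_num, Real.Gamma_add_one (by norm_num),
      Real.Gamma_one_half_eq]
    ring
  have hb : ((1/2 : ℝ)) ^ (-(2+1)/2 : ℝ) = 2 * Real.sqrt 2 := by
    rw [show (-(2+1)/2 : ℝ) = -(3/2) by norm_num, show ((1/2:ℝ)) = 2⁻¹ by norm_num,
      Real.inv_rpow (by norm_num), Real.rpow_neg (by norm_num), inv_inv,
      show (3/2:ℝ) = 1 + 1/2 by norm_num, Real.rpow_add (by norm_num), Real.rpow_one,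
      ← Real.sqrt_eq_rpow]
  rw [hg, hb, Real.sqrt_mul (by norm_num)]
  ring

lemma integral_sq_gauss_kernel :
    ∫ x : ℝ, x^2 * Real.exp (-(1/2) * x^2) = Real.sqrt (2*π) := by
  have hint := integrable_sq_gauss_kernel
  have hsplit := intervalIntegral.integral_Iic_add_Ioi (b := (0:ℝ)) (μ := volume)
    hint.integrableOn hint.integrableOn
  have hIic : ∫ x in Iic (0:ℝ), x^2 * Real.exp (-(1/2) * x^2)
      = ∫ x in Ioi (0:ℝ), x^2 * Real.exp (-(1/2) * x^2) := by
    rw [← neg_zero, ← integral_comp_neg_Ioi]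
    simp
  rw [← hsplit, hIic, integral_Ioi_sq_gauss]
  ring

lemma stdg_integral_sq : ∫ x, x^2 ∂(gaussianReal 0 1) = 1 := by
  rw [integral_gaussianReal_transfer]
  simp only [gaussian_pdf_eq]
  have : ∀ x : ℝ, (Real.sqrt (2*π))⁻¹ * Real.exp (-(1/2) * x^2) * x^2
      = (Real.sqrt (2*π))⁻¹ * (x^2 * Real.exp (-(1/2) * x^2)) := fun x => by ring
  simp only [this]
  rw [integral_const_mul, integral_sq_gauss_kernel]
  rw [inv_mul_cancel₀]
  positivity

/-! ### Coordinate moments of the standard Gaussian on `ℝᵏ` -/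

instance instPb (k : ℕ) : IsProbabilityMeasure (stdGaussian k) := by
  unfold _root_.stdGaussian; infer_instance

section pi

noncomputable local instance (priority := 2000) gaussSpace : MeasureSpace ℝ :=
  ⟨gaussianReal 0 1⟩

local instance : IsProbabilityMeasure (volume : Measure ℝ) :=
  inferInstanceAs (IsProbabilityMeasure (gaussianReal 0 1))

variable {k : ℕ}

lemma stdGaussian_eq_volume : stdGaussian k = (volume : Measure (Fin k → ℝ)) := rfl

lemma integrable_eval (i : Fin k) :
    Integrable (fun z : Fin k → ℝ => z i) (stdGaussian k) := by
  rw [stdGaussian_eq_volume]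
  have key : ∀ l : Fin k, Integrable (fun x : ℝ => if l = i then x else 1)
      (gaussianReal 0 1) := by
    intro l
    rcases eq_or_ne l i with rfl | hl
    · simpa using stdg_integrable_id
    · simp only [if_neg hl]
      exact integrable_const 1
  have h := Integrable.fintype_prod (𝕜 := ℝ)
    (f := fun l (x : ℝ) => if l = i then x else 1) (fun l => key l)
  refine h.congr (Filter.Eventually.of_forall fun z => ?_)
  simp [Finset.prod_ite_eq']

lemma integral_eval (i : Fin k) : ∫ z, z i ∂(stdGaussian k) = 0 := by
  rw [stdGaussian_eq_volume]
  have h := MeasureTheory.integral_fintype_prod_eq_prod (𝕜 := ℝ) (ι := Fin k)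
      (μ := fun _ => (volume : Measure ℝ))
    (f := fun l (x : ℝ) => if l = i then x else 1)
  have h2 : ∀ z : Fin k → ℝ, (∏ l, if l = i then z l else 1) = z i := by
    intro z; simp [Finset.prod_ite_eq']
  simp only [h2] at h
  rw [show (volume : Measure (Fin k → ℝ)) = Measure.pi (fun _ => volume) from rfl, h]
  refine Finset.prod_eq_zero (Finset.mem_univ i) ?_
  simp only [eq_self_iff_true, if_true]
  exact stdg_integral_id

lemma integrable_mul_eval (i j : Fin k) :
    Integrable (fun z : Fin k → ℝ => z i * z j) (stdGaussian k) := by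
  rw [stdGaussian_eq_volume]
  have key : ∀ l : Fin k, Integrable
      (fun x : ℝ => (if l = i then x else 1) * (if l = j then x else 1))
      (gaussianReal 0 1) := by
    intro l
    rcases eq_or_ne l i with rfl | hl
    · rcases eq_or_ne l j with rfl | hl'
      · simpa [pow_two] using stdg_integrable_sq
      · simpa [if_neg hl'] using stdg_integrable_id
    · rcases eq_or_ne l j with rfl | hl'
      · simpa [if_neg hl] using stdg_integrable_id
      · simp only [if_neg hl, if_neg hl', mul_one]
        exact integrable_const 1
  have h := Integrable.fintype_prod (𝕜 := ℝ)
    (f := fun l (x : ℝ) => (if l = i then x else 1) * (if l = j then x else 1))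
    (fun l => key l)
  refine h.congr (Filter.Eventually.of_forall fun z => ?_)
  simp only [Finset.prod_mul_distrib]
  simp [Finset.prod_ite_eq']

lemma integral_mul_eval (i j : Fin k) :
    ∫ z, z i * z j ∂(stdGaussian k) = if i = j then 1 else 0 := by
  rw [stdGaussian_eq_volume]
  have h := MeasureTheory.integral_fintype_prod_eq_prod (𝕜 := ℝ) (ι := Fin k)
      (μ := fun _ => (volume : Measure ℝ))
    (f := fun l (x : ℝ) => (if l = i then x else 1) * (if l = j then x else 1))
  have h2 : ∀ z : Fin k → ℝ,
      (∏ l, (if l = i then z l else 1) * (if l = j then z l else 1)) = z i * z j := by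
    intro z
    simp only [Finset.prod_mul_distrib]
    simp [Finset.prod_ite_eq']
  simp only [h2] at h
  rw [show (volume : Measure (Fin k → ℝ)) = Measure.pi (fun _ => volume) from rfl, h]
  rcases eq_or_ne i j with rfl | hij
  · rw [if_pos rfl]
    refine Finset.prod_eq_one fun l _ => ?_
    rcases eq_or_ne l i with rfl | hl
    · simp only [eq_self_iff_true, if_true, ← pow_two]
      exact stdg_integral_sq
    · simp only [if_neg hl, mul_one]
      simp
  · rw [if_neg hij]
    refine Finset.prod_eq_zero (Finset.mem_univ i) ?_
    simp only [eq_self_iff_true, if_true, hij, if_false, mul_one]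
    exact stdg_integral_id

end pi

/-! ### Dot product moments -/

variable {k : ℕ}

lemma integrable_dot (v : Fin k → ℝ) :
    Integrable (fun z : Fin k → ℝ => v ⬝ᵥ z) (stdGaussian k) := by
  simp only [dotProduct]
  exact integrable_finset_sum _ fun i _ => (integrable_eval i).const_mul (v i)

lemma integral_dot (v : Fin k → ℝ) : ∫ z, v ⬝ᵥ z ∂(stdGaussian k) = 0 := by
  simp only [dotProduct]
  rw [integral_finset_sum _ fun i _ => (integrable_eval i).const_mul (v i)]
  simp [integral_const_mul, integral_eval]

lemma integrable_dot_mul (v w : Fin k → ℝ) :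
    Integrable (fun z : Fin k → ℝ => (v ⬝ᵥ z) * (w ⬝ᵥ z)) (stdGaussian k) := by
  have hrepr : ∀ z : Fin k → ℝ, (v ⬝ᵥ z) * (w ⬝ᵥ z)
      = ∑ i, ∑ j, (v i * w j) * (z i * z j) := by
    intro z
    simp only [dotProduct, Finset.sum_mul_sum]
    exact Finset.sum_congr rfl fun i _ => Finset.sum_congr rfl fun j _ => by ring
  simp only [hrepr]
  exact integrable_finset_sum _ fun i _ => integrable_finset_sum _ fun j _ =>
    (integrable_mul_eval i j).const_mul _

lemma integral_dot_mul (v w : Fin k → ℝ) :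
    ∫ z, (v ⬝ᵥ z) * (w ⬝ᵥ z) ∂(stdGaussian k) = v ⬝ᵥ w := by
  have hrepr : ∀ z : Fin k → ℝ, (v ⬝ᵥ z) * (w ⬝ᵥ z)
      = ∑ i, ∑ j, (v i * w j) * (z i * z j) := by
    intro z
    simp only [dotProduct, Finset.sum_mul_sum]
    exact Finset.sum_congr rfl fun i _ => Finset.sum_congr rfl fun j _ => by ring
  simp only [hrepr]
  rw [integral_finset_sum _ fun i _ => integrable_finset_sum _ fun j _ =>
    (integrable_mul_eval i j).const_mul _]
  have : ∀ i : Fin k, ∫ z, (∑ j, (v i * w j) * (z i * z j)) ∂(stdGaussian k)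
      = v i * w i := by
    intro i
    rw [integral_finset_sum _ fun j _ => (integrable_mul_eval i j).const_mul _]
    simp only [integral_const_mul, integral_mul_eval]
    simp [Finset.sum_ite_eq, mul_ite]
  simp only [this, dotProduct]

lemma integrable_dot_sq (v : Fin k → ℝ) :
    Integrable (fun z : Fin k → ℝ => (v ⬝ᵥ z)^2) (stdGaussian k) := by
  simpa [pow_two] using integrable_dot_mul v v

lemma integral_dot_sq (v : Fin k → ℝ) :
    ∫ z, (v ⬝ᵥ z)^2 ∂(stdGaussian k) = ∑ j, (v j)^2 := by
  have h := integral_dot_mul v v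
  simp only [pow_two]
  rw [h]
  simp [dotProduct, pow_two]

lemma integrable_coord_sq (i : Fin k) :
    Integrable (fun z : Fin k → ℝ => (z i)^2) (stdGaussian k) := by
  simpa [pow_two] using integrable_mul_eval i i

lemma integral_coord_sq (i : Fin k) :
    ∫ z, (z i)^2 ∂(stdGaussian k) = 1 := by
  have := integral_mul_eval i i
  simpa [pow_two] using this

end StdGaussianAux

open StdGaussianAux in
/-- **Closed form of the linear-IGM negative ELBOProxy (Proposition).**
Fix `σ > 0`, `y ∈ ℝᵐ`, `A ∈ ℝ^{m×n}`, `G ∈ ℝ^{n×k}`, `μ ∈ ℝᵏ` and invertible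
`U ∈ ℝ^{k×k}`. With `ℓ` the log-density of the Gaussian `N(μ, UUᵀ)`, the
negative ELBOProxy for the Gaussian variational family admits the stated
closed form. -/
theorem stmt2 {m n k : ℕ} (σ : ℝ) (hσ : 0 < σ) (y : Fin m → ℝ)
    (A : Matrix (Fin m) (Fin n) ℝ) (G : Matrix (Fin n) (Fin k) ℝ)
    (μ : Fin k → ℝ) (U : Matrix (Fin k) (Fin k) ℝ) (hU : IsUnit U.det)
    (ℓ : (Fin k → ℝ) → ℝ)
    (hℓ : ∀ v, ℓ v = -(1/2) * ((v - μ) ⬝ᵥ ((U * Uᵀ)⁻¹ *ᵥ (v - μ)))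
        - ((k : ℝ)/2) * Real.log (2 * Real.pi) - (1/2) * Real.log |(U * Uᵀ).det|) :
    ∫ z : Fin k → ℝ,
        ((1/(2*σ^2)) * (∑ i, (y i - ((A * G) *ᵥ (U *ᵥ z + μ)) i) ^ 2)
          + (1/2) * (∑ i, ((U *ᵥ z + μ) i) ^ 2)
          + ℓ (U *ᵥ z + μ)) ∂(stdGaussian k)
      = (1/(2*σ^2)) * ((∑ i, (y i) ^ 2) + (∑ i, ∑ j, ((A * G * U) i j) ^ 2)
            + (∑ i, (((A * G) *ᵥ μ) i) ^ 2))
        - (1/σ^2) * (y ⬝ᵥ ((A * G) *ᵥ μ))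
        + (1/2) * ((∑ i, ∑ j, (U i j) ^ 2) + (∑ i, (μ i) ^ 2))
        - Real.log |U.det| - (k : ℝ)/2 - ((k : ℝ)/2) * Real.log (2 * Real.pi) := by
  classical
  set c : Fin m → ℝ := fun i => y i - ((A * G) *ᵥ μ) i with hc
  set L : Fin k → ℝ := fun j => -(1/σ^2) * ((c ᵥ* (A * G * U)) j) + (μ ᵥ* U) j with hL
  set C : ℝ := (1/(2*σ^2)) * (∑ i, (c i)^2) + (1/2) * (∑ i, (μ i)^2)
    - ((k:ℝ)/2) * Real.log (2 * Real.pi) - (1/2) * Real.log |(U * Uᵀ).det| with hC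
  -- pointwise facts
  have hmv : ∀ z : Fin k → ℝ, (A * G) *ᵥ (U *ᵥ z + μ)
      = (A * G * U) *ᵥ z + (A * G) *ᵥ μ := by
    intro z; rw [Matrix.mulVec_add, Matrix.mulVec_mulVec]
  have hq : ∀ z : Fin k → ℝ,
      (U *ᵥ z + μ - μ) ⬝ᵥ ((U * Uᵀ)⁻¹ *ᵥ (U *ᵥ z + μ - μ)) = ∑ i, (z i)^2 := by
    intro z
    have h1 : U *ᵥ z + μ - μ = U *ᵥ z := add_sub_cancel_right _ _
    rw [h1]
    have hinv : U⁻¹ *ᵥ (U *ᵥ z) = z := by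
      rw [Matrix.mulVec_mulVec, Matrix.nonsing_inv_mul U hU, Matrix.one_mulVec]
    have h2 : (U * Uᵀ)⁻¹ *ᵥ (U *ᵥ z) = (U⁻¹)ᵀ *ᵥ z := by
      rw [Matrix.mul_inv_rev, ← Matrix.mulVec_mulVec, hinv, Matrix.transpose_nonsing_inv]
    rw [h2, Matrix.mulVec_transpose, dotProduct_comm, Matrix.dotProduct_mulVec,
      Matrix.vecMul_vecMul, Matrix.nonsing_inv_mul U hU, Matrix.vecMul_one]
    simp [dotProduct, pow_two]
  have hA : ∀ z : Fin k → ℝ, ∑ i, (y i - ((A * G) *ᵥ (U *ᵥ z + μ)) i)^2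
      = (∑ i, (c i)^2) - 2 * ((c ᵥ* (A * G * U)) ⬝ᵥ z)
        + ∑ i, ((A * G * U) i ⬝ᵥ z)^2 := by
    intro z
    have e : ∀ i, (y i - ((A * G) *ᵥ (U *ᵥ z + μ)) i)^2
        = (c i)^2 - 2 * (c i * (((A * G * U) *ᵥ z) i)) + (((A * G * U) *ᵥ z) i)^2 := by
      intro i; rw [hmv z]; simp only [Pi.add_apply, hc]; ring
    rw [Finset.sum_congr rfl fun i _ => e i, Finset.sum_add_distrib,
      Finset.sum_sub_distrib, ← Finset.mul_sum]
    have h3 : ∑ i, (c i * (((A * G * U) *ᵥ z) i)) = (c ᵥ* (A * G * U)) ⬝ᵥ z := by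
      rw [← Matrix.dotProduct_mulVec]; rfl
    rw [h3]
    rfl
  have hB : ∀ z : Fin k → ℝ, ∑ i, ((U *ᵥ z + μ) i)^2
      = (∑ i, ((U i) ⬝ᵥ z)^2) + 2 * ((μ ᵥ* U) ⬝ᵥ z) + ∑ i, (μ i)^2 := by
    intro z
    have e : ∀ i, ((U *ᵥ z + μ) i)^2
        = ((U *ᵥ z) i)^2 + 2 * (μ i * (U *ᵥ z) i) + (μ i)^2 := by
      intro i; simp only [Pi.add_apply]; ring
    rw [Finset.sum_congr rfl fun i _ => e i, Finset.sum_add_distrib,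
      Finset.sum_add_distrib, ← Finset.mul_sum]
    have h3 : ∑ i, (μ i * (U *ᵥ z) i) = (μ ᵥ* U) ⬝ᵥ z := by
      rw [← Matrix.dotProduct_mulVec]; rfl
    rw [h3]
    rfl
  have hLz : ∀ z : Fin k → ℝ, L ⬝ᵥ z
      = -(1/σ^2) * ((c ᵥ* (A * G * U)) ⬝ᵥ z) + (μ ᵥ* U) ⬝ᵥ z := by
    intro z
    simp only [hL, dotProduct, Finset.mul_sum]
    rw [← Finset.sum_add_distrib]
    exact Finset.sum_congr rfl fun j _ => by ring
  have key : ∀ z : Fin k → ℝ,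
      (1/(2*σ^2)) * (∑ i, (y i - ((A * G) *ᵥ (U *ᵥ z + μ)) i) ^ 2)
          + (1/2) * (∑ i, ((U *ᵥ z + μ) i) ^ 2) + ℓ (U *ᵥ z + μ)
      = C + L ⬝ᵥ z + (1/(2*σ^2)) * (∑ i, ((A * G * U) i ⬝ᵥ z)^2)
          + (1/2) * (∑ i, ((U i) ⬝ᵥ z)^2) + (-(1/2)) * (∑ i, (z i)^2) := by
    intro z
    rw [hℓ (U *ᵥ z + μ), hq z, hA z, hB z, hLz z, hC]
    ring
  have hfun : (fun z : Fin k → ℝ =>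
      (1/(2*σ^2)) * (∑ i, (y i - ((A * G) *ᵥ (U *ᵥ z + μ)) i) ^ 2)
        + (1/2) * (∑ i, ((U *ᵥ z + μ) i) ^ 2) + ℓ (U *ᵥ z + μ))
      = fun z => C + L ⬝ᵥ z + (1/(2*σ^2)) * (∑ i, ((A * G * U) i ⬝ᵥ z)^2)
        + (1/2) * (∑ i, ((U i) ⬝ᵥ z)^2) + (-(1/2)) * (∑ i, (z i)^2) := funext key
  rw [hfun]
  have hiL : Integrable (fun z : Fin k → ℝ => L ⬝ᵥ z) (stdGaussian k) := integrable_dot L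
  have hi1 : Integrable (fun z : Fin k → ℝ =>
      (1/(2*σ^2)) * (∑ i, ((A * G * U) i ⬝ᵥ z)^2)) (stdGaussian k) :=
    (integrable_finset_sum _ fun i _ => integrable_dot_sq _).const_mul _
  have hi2 : Integrable (fun z : Fin k → ℝ =>
      (1/2) * (∑ i, ((U i) ⬝ᵥ z)^2)) (stdGaussian k) :=
    (integrable_finset_sum _ fun i _ => integrable_dot_sq _).const_mul _
  have hi3 : Integrable (fun z : Fin k → ℝ =>
      (-(1/2)) * (∑ i, (z i)^2)) (stdGaussian k) :=
    (integrable_finset_sum _ fun i _ => integrable_coord_sq i).const_mul _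
  have hI01 : Integrable (fun z : Fin k → ℝ => C + L ⬝ᵥ z) (stdGaussian k) :=
    (integrable_const C).add hiL
  have hI012 : Integrable (fun z : Fin k → ℝ => C + L ⬝ᵥ z
      + (1/(2*σ^2)) * (∑ i, ((A * G * U) i ⬝ᵥ z)^2)) (stdGaussian k) := hI01.add hi1
  have hI0123 : Integrable (fun z : Fin k → ℝ => C + L ⬝ᵥ z
      + (1/(2*σ^2)) * (∑ i, ((A * G * U) i ⬝ᵥ z)^2)
      + (1/2) * (∑ i, ((U i) ⬝ᵥ z)^2)) (stdGaussian k) := hI012.add hi2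
  rw [integral_add hI0123 hi3,
    integral_add hI012 hi2,
    integral_add hI01 hi1,
    integral_add (integrable_const C) hiL,
    integral_const, integral_dot, integral_const_mul, integral_const_mul, integral_const_mul,
    integral_finset_sum _ (fun i _ => integrable_dot_sq ((A * G * U) i)),
    integral_finset_sum _ (fun i _ => integrable_dot_sq (U i)),
    integral_finset_sum _ (fun i _ => integrable_coord_sq i)]
  simp only [integral_dot_sq, integral_coord_sq, measure_univ, probReal_univ, ENNReal.toReal_one,
    smul_eq_mul, one_mul, Finset.sum_const, Finset.card_univ, Fintype.card_fin,
    nsmul_eq_mul, mul_one, add_zero]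
  have hexp : ∑ i, (c i)^2
      = (∑ i, (y i)^2) - 2 * (y ⬝ᵥ ((A * G) *ᵥ μ)) + ∑ i, (((A * G) *ᵥ μ) i)^2 := by
    have e : ∀ i, (c i)^2
        = (y i)^2 - 2 * (y i * ((A * G) *ᵥ μ) i) + (((A * G) *ᵥ μ) i)^2 := by
      intro i; simp only [hc]; ring
    rw [Finset.sum_congr rfl fun i _ => e i, Finset.sum_add_distrib,
      Finset.sum_sub_distrib, ← Finset.mul_sum]
    rfl
  have hdet0 : U.det ≠ 0 := hU.ne_zero
  have hlog : Real.log |(U * Uᵀ).det| = 2 * Real.log |U.det| := by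
    rw [Matrix.det_mul, Matrix.det_transpose, abs_mul,
      Real.log_mul (abs_ne_zero.2 hdet0) (abs_ne_zero.2 hdet0)]
    ring
  rw [hC, hexp, hlog]
  ring
end

section
/- Fix σ > 0, let A ∈ ℝ^{m×n} have rank m with k ≤ m ≤ n, let y⁽¹⁾,…,y⁽ᴺ⁾ ∈ ℝ^m, and set Y_N := (1/N)∑ᵢ y⁽ⁱ⁾(y⁽ⁱ⁾)ᵀ. Suppose E ∈ ℝ^{m×k} has orthonormal columns, L ∈ ℝ^{k×k} is diagonal with every diagonal entry L_ii ≥ σ², Y_N E = E L, and R, R̃ ∈ ℝ^{k×k} are orthogonal. Let G_* ∈ ℝ^{n×k} satisfy A G_* = E (L − σ² I)^{1/2} R, and define μ_i^* := (G_*ᵀAᵀA G_* + σ² I)⁻¹ G_*ᵀAᵀ y⁽ⁱ⁾ and U_i^* := σ (G_*ᵀAᵀA G_* + σ² I)^{−1/2} R̃ for i = 1,…,N. Then (G_*, {μ_i^*, U_i^*}) is a stationary point of the loss L(G,{μ_i,U_i}) = (1/N)∑ᵢ [ (1/(2σ²))(‖y⁽ⁱ⁾‖² + ‖A G U_i‖_F²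 + ‖A G μ_i‖²) − (1/σ²)⟨y⁽ⁱ⁾, A G μ_i⟩ + (1/2)(‖U_i‖_F² + ‖μ_i‖²) − log|det U_i| ]; that is, the following three gradient equations all hold: (1/N)∑ᵢ AᵀA G_* (U_i^* U_i^{*ᵀ} + μ_i^* μ_i^{*ᵀ}) = (1/N)∑ᵢ Aᵀ y⁽ⁱ⁾ μ_i^{*ᵀ}; σ⁻² G_*ᵀAᵀA G_* U_i^* + U_i^* − (U_i^{*ᵀ})⁻¹ = 0 for all i; and σ⁻²(G_*ᵀAᵀA G_* μ_i^* − G_*ᵀAᵀ y⁽ⁱ⁾) + μ_i^* = 0 for all i (Theorem: stationary points of the linear-IGM ELBOProxy loss). -/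
open Matrix

lemma aux_vmv {m n p q : Type*} [Fintype n] [Fintype q]
    (P : Matrix m n ℝ) (Q : Matrix p q ℝ) (u : n → ℝ) (v : q → ℝ) :
    Matrix.vecMulVec (P *ᵥ u) (Q *ᵥ v) = P * Matrix.vecMulVec u v * Qᵀ := by
  ext i j
  simp only [Matrix.vecMulVec_apply, Matrix.mulVec, Matrix.mul_apply, dotProduct,
    Matrix.transpose_apply, Finset.sum_mul, Finset.mul_sum]
  refine Finset.sum_congr rfl fun b _ => Finset.sum_congr rfl fun a _ => by ring

/-- **Stationary points of the linear-IGM ELBOProxy loss (Theorem).**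
Fix `σ > 0`, let `A ∈ ℝ^{m×n}` have rank `m` with `k ≤ m ≤ n`, measurements
`y⁽¹⁾,…,y⁽ᴺ⁾ ∈ ℝᵐ` with sample covariance `Y_N`. Suppose `E` has orthonormal
columns, `L` is diagonal with entries `≥ σ²`, `Y_N E = E L`, and `R, R̃` are
orthogonal. Let `G_*` satisfy `A G_* = E (L − σ² I)^{1/2} R`, let `W` be the
unique positive definite square root of `G_*ᵀAᵀA G_* + σ² I`, and set
`μ_i^* = (G_*ᵀAᵀA G_* + σ² I)⁻¹ G_*ᵀAᵀ y⁽ⁱ⁾` and `U_i^* = σ W⁻¹ R̃`.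
Then the three gradient equations of the loss all hold. -/
theorem stmt6 {m n k N : ℕ} (hN : 0 < N) (σ : ℝ) (hσ : 0 < σ)
    (A : Matrix (Fin m) (Fin n) ℝ) (hA : A.rank = m) (hkm : k ≤ m) (hmn : m ≤ n)
    (y : Fin N → Fin m → ℝ)
    (YN : Matrix (Fin m) (Fin m) ℝ)
    (hYN : YN = (N : ℝ)⁻¹ • ∑ i, Matrix.vecMulVec (y i) (y i))
    (E : Matrix (Fin m) (Fin k) ℝ) (hE : Eᵀ * E = 1)
    (L : Fin k → ℝ) (hL : ∀ i, σ ^ 2 ≤ L i)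
    (hEig : YN * E = E * Matrix.diagonal L)
    (R Rt : Matrix (Fin k) (Fin k) ℝ) (hR : Rᵀ * R = 1) (hRt : Rtᵀ * Rt = 1)
    (Gs : Matrix (Fin n) (Fin k) ℝ)
    (hGs : A * Gs = E * Matrix.diagonal (fun i => Real.sqrt (L i - σ ^ 2)) * R)
    (W : Matrix (Fin k) (Fin k) ℝ) (hWpd : W.PosDef)
    (hW : W * W = Gsᵀ * Aᵀ * A * Gs + σ ^ 2 • (1 : Matrix (Fin k) (Fin k) ℝ))
    (μ : Fin N → Fin k → ℝ)
    (hμ : ∀ i, μ i = (Gsᵀ * Aᵀ * A * Gs + σ ^ 2 • (1 : Matrix (Fin k) (Fin k) ℝ))⁻¹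
        *ᵥ (Gsᵀ *ᵥ (Aᵀ *ᵥ y i)))
    (U : Fin N → Matrix (Fin k) (Fin k) ℝ)
    (hU : ∀ i, U i = σ • W⁻¹ * Rt) :
    ((N : ℝ)⁻¹ • ∑ i, Aᵀ * A * Gs * (U i * (U i)ᵀ + Matrix.vecMulVec (μ i) (μ i))
        = (N : ℝ)⁻¹ • ∑ i, Matrix.vecMulVec (Aᵀ *ᵥ y i) (μ i))
    ∧ (∀ i, (σ ^ 2)⁻¹ • (Gsᵀ * Aᵀ * A * Gs) * U i + U i - ((U i)ᵀ)⁻¹ = 0)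
    ∧ (∀ i, (σ ^ 2)⁻¹ • ((Gsᵀ * Aᵀ * A * Gs) *ᵥ μ i - Gsᵀ *ᵥ (Aᵀ *ᵥ y i)) + μ i = 0) := by
  have hσ2 : (0:ℝ) < σ ^ 2 := by positivity
  have hLpos : ∀ i, (0:ℝ) < L i := fun i => lt_of_lt_of_le hσ2 (hL i)
  have hLne : ∀ i, L i ≠ 0 := fun i => (hLpos i).ne'
  set d : Fin k → ℝ := fun i => Real.sqrt (L i - σ ^ 2) with hd
  have hd2 : ∀ i, d i * d i = L i - σ ^ 2 := fun i =>
    Real.mul_self_sqrt (by linarith [hL i])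
  set D : Matrix (Fin k) (Fin k) ℝ := Matrix.diagonal d with hD
  set S : Matrix (Fin k) (Fin k) ℝ :=
    Gsᵀ * Aᵀ * A * Gs + σ ^ 2 • (1 : Matrix (Fin k) (Fin k) ℝ) with hS
  -- basic cancellation facts
  have hRR : R * Rᵀ = 1 := mul_eq_one_comm.mp hR
  have hRtRt : Rt * Rtᵀ = 1 := mul_eq_one_comm.mp hRt
  have hRcan : ∀ (X : Matrix (Fin k) (Fin k) ℝ), R * (Rᵀ * X) = X := fun X => by
    rw [← Matrix.mul_assoc, hRR, Matrix.one_mul]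
  have hEcan : ∀ (X : Matrix (Fin k) (Fin k) ℝ), Eᵀ * (E * X) = X := fun X => by
    rw [← Matrix.mul_assoc, hE, Matrix.one_mul]
  have hdiag : ∀ (a b : Fin k → ℝ) (X : Matrix (Fin k) (Fin k) ℝ),
      Matrix.diagonal a * (Matrix.diagonal b * X) = Matrix.diagonal (fun i => a i * b i) * X :=
    fun a b X => by rw [← Matrix.mul_assoc, Matrix.diagonal_mul_diagonal]
  -- W facts
  have hWT : Wᵀ = W := by
    rw [← Matrix.conjTranspose_eq_transpose_of_trivial]; exact hWpd.isHermitian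
  have hWdet : IsUnit W.det := isUnit_iff_ne_zero.mpr hWpd.det_pos.ne'
  have hWiW : W⁻¹ * W = 1 := Matrix.nonsing_inv_mul W hWdet
  have hWWi : W * W⁻¹ = 1 := Matrix.mul_nonsing_inv W hWdet
  have hWiT : W⁻¹ᵀ = W⁻¹ := by rw [Matrix.transpose_nonsing_inv, hWT]
  -- representations
  have hBrep : A * Gs = E * (D * R) := by rw [hGs, Matrix.mul_assoc]
  have hBtrep : (A * Gs)ᵀ = Rᵀ * (D * Eᵀ) := by
    rw [hBrep]
    simp only [Matrix.transpose_mul, hD, Matrix.diagonal_transpose, Matrix.mul_assoc]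
  have hMM : Gsᵀ * Aᵀ * A * Gs = (A * Gs)ᵀ * (A * Gs) := by
    rw [Matrix.transpose_mul, Matrix.mul_assoc]
  have hMrep : (A * Gs)ᵀ * (A * Gs) = Rᵀ * (Matrix.diagonal (fun i => L i - σ ^ 2) * R) := by
    rw [hBtrep, hBrep]
    simp only [Matrix.mul_assoc]
    rw [hEcan (D * R), hD, hdiag d d R,
      show (fun i => d i * d i) = (fun i => L i - σ ^ 2) from funext hd2]
  have hsmul1 : (σ ^ 2 • (1 : Matrix (Fin k) (Fin k) ℝ)) =
      Matrix.diagonal (fun _ => σ ^ 2) := by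
    ext i j
    by_cases h : i = j <;> simp [h, Matrix.one_apply, Matrix.diagonal_apply]
  have hSrep : S = Rᵀ * (Matrix.diagonal L * R) := by
    have h0 : (Matrix.diagonal (fun _ => σ ^ 2) : Matrix (Fin k) (Fin k) ℝ)
        = Rᵀ * (Matrix.diagonal (fun _ => σ ^ 2) * R) := by
      rw [← hsmul1, Matrix.smul_mul, Matrix.one_mul, Matrix.mul_smul, hR, hsmul1]
    rw [hS, hMM, hMrep, hsmul1, h0, ← Matrix.mul_add, ← Matrix.add_mul,
      Matrix.diagonal_add,
      show (fun i => (L i - σ ^ 2) + σ ^ 2) = L from funext fun i => by ring]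
  have hLL : (fun i => L i * (L i)⁻¹) = fun _ : Fin k => (1:ℝ) :=
    funext fun i => mul_inv_cancel₀ (hLne i)
  have hSinv : S⁻¹ = Rᵀ * (Matrix.diagonal (fun i => (L i)⁻¹) * R) := by
    apply Matrix.inv_eq_right_inv
    rw [hSrep]
    simp only [Matrix.mul_assoc]
    rw [hRcan, hdiag, hLL, Matrix.diagonal_one, Matrix.one_mul, hR]
  have hSS : S * S⁻¹ = 1 := by
    rw [hSinv, hSrep]
    simp only [Matrix.mul_assoc]
    rw [hRcan, hdiag, hLL, Matrix.diagonal_one, Matrix.one_mul, hR]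
  have hST : Sᵀ = S := by rw [← hW, Matrix.transpose_mul, hWT]
  have hSiT : S⁻¹ᵀ = S⁻¹ := by rw [Matrix.transpose_nonsing_inv, hST]
  have hSiWW : S⁻¹ = W⁻¹ * W⁻¹ := by rw [← hW, Matrix.mul_inv_rev]
  -- key matrix identities
  have hBS : (A * Gs) * S⁻¹ = E * (Matrix.diagonal (fun i => d i * (L i)⁻¹) * R) := by
    rw [hBrep, hSinv]
    simp only [Matrix.mul_assoc]
    rw [hRcan, hD, hdiag]
  have keyB2 : YN * ((A * Gs) * S⁻¹) = A * Gs := by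
    rw [hBS, ← Matrix.mul_assoc, hEig, Matrix.mul_assoc, hdiag, hBrep, hD,
      show (fun i => L i * (d i * (L i)⁻¹)) = d from funext fun i => by
        rw [mul_comm (d i) ((L i)⁻¹), ← mul_assoc, mul_inv_cancel₀ (hLne i), one_mul]]
  have hSinvM : S⁻¹ * ((A * Gs)ᵀ * (A * Gs)) =
      Rᵀ * (Matrix.diagonal (fun i => (L i)⁻¹ * (L i - σ ^ 2)) * R) := by
    rw [hMrep, hSinv]
    simp only [Matrix.mul_assoc]
    rw [hRcan, hdiag]
  have keyB : (A * Gs) * (σ ^ 2 • S⁻¹) + (A * Gs) * (S⁻¹ * ((A * Gs)ᵀ * (A * Gs)))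
      = A * Gs := by
    have h1 : (A * Gs) * (σ ^ 2 • S⁻¹)
        = E * (Matrix.diagonal (fun i => σ ^ 2 * (d i * (L i)⁻¹)) * R) := by
      rw [Matrix.mul_smul, hBS, ← Matrix.mul_smul, ← Matrix.smul_mul, ← Matrix.diagonal_smul]
      congr
    have h2 : (A * Gs) * (S⁻¹ * ((A * Gs)ᵀ * (A * Gs)))
        = E * (Matrix.diagonal (fun i => d i * ((L i)⁻¹ * (L i - σ ^ 2))) * R) := by
      rw [hSinvM, hBrep]
      simp only [Matrix.mul_assoc]
      rw [hRcan, hD, hdiag]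
    rw [h1, h2, ← Matrix.mul_add, ← Matrix.add_mul, Matrix.diagonal_add, hBrep, hD,
      show (fun i => σ ^ 2 * (d i * (L i)⁻¹) + d i * ((L i)⁻¹ * (L i - σ ^ 2))) = d from
        funext fun i => by have h := hLne i; field_simp; ring]
  -- U and μ representations
  have hUrep : ∀ i, U i = σ • (W⁻¹ * Rt) := fun i => by
    rw [hU i, Matrix.smul_mul]
  have hUtrep : ∀ i, (U i)ᵀ = σ • (Rtᵀ * W⁻¹) := fun i => by
    rw [hUrep i, Matrix.transpose_smul, Matrix.transpose_mul, hWiT]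
  have hμrep : ∀ i, μ i = (S⁻¹ * (A * Gs)ᵀ) *ᵥ y i := fun i => by
    rw [hμ i, Matrix.mulVec_mulVec, Matrix.mulVec_mulVec, Matrix.mul_assoc,
      ← Matrix.transpose_mul]
  refine ⟨?_, ?_, ?_⟩
  · -- first gradient equation
    have hUU : ∀ i, U i * (U i)ᵀ = σ ^ 2 • S⁻¹ := fun i => by
      rw [hUtrep i, hUrep i, Matrix.smul_mul, Matrix.mul_smul, smul_smul, ← sq, hSiWW]
      congr 1
      rw [Matrix.mul_assoc, ← Matrix.mul_assoc Rt Rtᵀ W⁻¹, hRtRt, Matrix.one_mul]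
    have hCt : (S⁻¹ * (A * Gs)ᵀ)ᵀ = (A * Gs) * S⁻¹ := by
      rw [Matrix.transpose_mul, Matrix.transpose_transpose, hSiT]
    have hμμ : ∀ i, Matrix.vecMulVec (μ i) (μ i)
        = (S⁻¹ * (A * Gs)ᵀ) * Matrix.vecMulVec (y i) (y i) * ((A * Gs) * S⁻¹) := fun i => by
      rw [hμrep i, aux_vmv, hCt]
    have hRHS : ∀ i, Matrix.vecMulVec (Aᵀ *ᵥ y i) (μ i)
        = Aᵀ * Matrix.vecMulVec (y i) (y i) * ((A * Gs) * S⁻¹) := fun i => by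
      rw [hμrep i, aux_vmv, hCt]
    have hZ : ∑ i, Matrix.vecMulVec (y i) (y i) = (N : ℝ) • YN := by
      rw [hYN, smul_smul, mul_inv_cancel₀ (by exact_mod_cast hN.ne'), one_smul]
    have hL1 : ∑ i, Aᵀ * A * Gs * (U i * (U i)ᵀ + Matrix.vecMulVec (μ i) (μ i))
        = (N : ℝ) • (Aᵀ * ((A * Gs) * (σ ^ 2 • S⁻¹))
            + Aᵀ * ((A * Gs) * (S⁻¹ * ((A * Gs)ᵀ * (YN * ((A * Gs) * S⁻¹)))))) := by
      have hterm : ∀ i, Aᵀ * A * Gs * (U i * (U i)ᵀ + Matrix.vecMulVec (μ i) (μ i))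
          = Aᵀ * ((A * Gs) * (σ ^ 2 • S⁻¹))
            + Aᵀ * ((A * Gs) * (S⁻¹ * ((A * Gs)ᵀ
              * (Matrix.vecMulVec (y i) (y i) * ((A * Gs) * S⁻¹))))) := fun i => by
        rw [hUU i, hμμ i]
        simp only [Matrix.mul_add, Matrix.mul_assoc]
      simp only [hterm]
      rw [Finset.sum_add_distrib, Finset.sum_const, Finset.card_univ, Fintype.card_fin]
      simp only [← Matrix.mul_sum]
      rw [← Matrix.sum_mul, hZ, smul_add]
      congr 1
      · rw [← Nat.cast_smul_eq_nsmul (R := ℝ)]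
      · simp only [Matrix.mul_smul, Matrix.smul_mul]
    have hR1 : ∑ i, Matrix.vecMulVec (Aᵀ *ᵥ y i) (μ i)
        = (N : ℝ) • (Aᵀ * (YN * ((A * Gs) * S⁻¹))) := by
      simp only [hRHS]
      rw [← Matrix.sum_mul, ← Matrix.mul_sum, hZ]
      simp only [Matrix.mul_smul, Matrix.smul_mul, Matrix.mul_assoc]
    rw [hL1, hR1]
    congr 1
    rw [keyB2, ← Matrix.mul_add, keyB]
  · -- second gradient equation
    intro i
    have hss : (σ ^ 2)⁻¹ * σ = σ⁻¹ := by
      rw [sq, mul_inv, mul_assoc, inv_mul_cancel₀ hσ.ne', mul_one]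
    have h2 : (σ:ℝ) • (W⁻¹ * Rt) = σ⁻¹ • ((σ ^ 2 • (1 : Matrix (Fin k) (Fin k) ℝ))
        * (W⁻¹ * Rt)) := by
      rw [Matrix.smul_mul, Matrix.one_mul, smul_smul]
      congr 1
      rw [sq, ← mul_assoc, inv_mul_cancel₀ hσ.ne', one_mul]
    have h1 : (σ ^ 2)⁻¹ • (Gsᵀ * Aᵀ * A * Gs) * U i + U i = σ⁻¹ • (W * Rt) := by
      rw [hUrep i, Matrix.smul_mul, Matrix.mul_smul, smul_smul, hss, h2, ← smul_add,
        ← Matrix.add_mul, ← hS, ← hW]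
      congr 1
      rw [Matrix.mul_assoc, ← Matrix.mul_assoc W W⁻¹ Rt, hWWi, Matrix.one_mul]
    have h3 : ((U i)ᵀ)⁻¹ = σ⁻¹ • (W * Rt) := by
      apply Matrix.inv_eq_right_inv
      rw [hUtrep i, Matrix.smul_mul, Matrix.mul_smul, smul_smul, mul_inv_cancel₀ hσ.ne',
        one_smul, Matrix.mul_assoc, ← Matrix.mul_assoc W⁻¹ W Rt, hWiW, Matrix.one_mul, hRt]
    rw [h1, h3, sub_self]
  · -- third gradient equation
    intro i
    have hMsub : Gsᵀ * Aᵀ * A * Gs = S - σ ^ 2 • (1 : Matrix (Fin k) (Fin k) ℝ) := by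
      rw [hS]; abel
    have hMS : (Gsᵀ * Aᵀ * A * Gs) * (S⁻¹ * (A * Gs)ᵀ)
        = (A * Gs)ᵀ - σ ^ 2 • (S⁻¹ * (A * Gs)ᵀ) := by
      rw [hMsub, Matrix.sub_mul, ← Matrix.mul_assoc, hSS, Matrix.one_mul,
        Matrix.smul_mul, Matrix.one_mul]
    have hv : (Gsᵀ * Aᵀ * A * Gs) *ᵥ μ i = Gsᵀ *ᵥ (Aᵀ *ᵥ y i) - σ ^ 2 • μ i := by
      rw [hμrep i, Matrix.mulVec_mulVec, hMS, Matrix.sub_mulVec, Matrix.smul_mulVec,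
        Matrix.transpose_mul, ← Matrix.mulVec_mulVec]
    rw [hv, sub_sub_cancel_left, smul_neg, smul_smul, inv_mul_cancel₀ hσ2.ne', one_smul,
      neg_add_cancel]
end

section
/- Let B ∈ ℝ^{m×k}, σ > 0, and let R̃ ∈ ℝ^{k×k} be orthogonal. Then U := σ (BᵀB + σ² I)^{−1/2} R̃ is invertible and satisfies the stationarity equation σ⁻² BᵀB U + U − (Uᵀ)⁻¹ = 0. -/
open Matrix

/-- **The variational covariance factor is a stationary point.**
Let `B ∈ ℝ^{m×k}`, `σ > 0`, and `R̃ ∈ ℝ^{k×k}` orthogonal. With `W` the unique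
positive definite square root of `BᵀB + σ²I`, the matrix `U = σ W⁻¹ R̃`
(i.e. `σ (BᵀB + σ²I)^{−1/2} R̃`) is invertible and satisfies the stationarity
equation `σ⁻² BᵀB U + U − (Uᵀ)⁻¹ = 0`. -/
theorem stmt8 {m k : ℕ} (B : Matrix (Fin m) (Fin k) ℝ) (σ : ℝ) (hσ : 0 < σ)
    (Rt : Matrix (Fin k) (Fin k) ℝ) (hRt : Rtᵀ * Rt = 1)
    (W : Matrix (Fin k) (Fin k) ℝ) (hWpd : W.PosDef)
    (hW : W * W = Bᵀ * B + σ^2 • (1 : Matrix (Fin k) (Fin k) ℝ))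
    (U : Matrix (Fin k) (Fin k) ℝ) (hU : U = σ • W⁻¹ * Rt) :
    IsUnit U ∧ (σ^2)⁻¹ • (Bᵀ * B) * U + U - (Uᵀ)⁻¹ = 0 := by
  have hσ0 : σ ≠ 0 := ne_of_gt hσ
  have hWdet : IsUnit W.det := isUnit_iff_ne_zero.2 (ne_of_gt hWpd.det_pos)
  have hWinv : W⁻¹ * W = 1 := Matrix.nonsing_inv_mul W hWdet
  have hWinv' : W * W⁻¹ = 1 := Matrix.mul_nonsing_inv W hWdet
  have hRt' : Rt * Rtᵀ = 1 := mul_eq_one_comm.1 hRt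
  have hWsymm : Wᵀ = W := hWpd.isHermitian
  -- right inverse of U
  have hUinv : U * (σ⁻¹ • (Rtᵀ * W)) = 1 := by
    rw [hU]
    have : W⁻¹ * Rt * (Rtᵀ * W) = 1 := by
      calc W⁻¹ * Rt * (Rtᵀ * W) = W⁻¹ * (Rt * Rtᵀ) * W := by
            simp [Matrix.mul_assoc]
        _ = 1 := by rw [hRt', Matrix.mul_one, hWinv]
    simp [Matrix.smul_mul, Matrix.mul_smul, smul_smul, inv_mul_cancel₀ hσ0, mul_inv_cancel₀ hσ0, this,
      Matrix.mul_assoc]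
  have hUunit : IsUnit U := by
    rw [Matrix.isUnit_iff_isUnit_det]
    have := congrArg Matrix.det hUinv
    rw [Matrix.det_mul, Matrix.det_one] at this
    exact IsUnit.of_mul_eq_one _ this
  refine ⟨hUunit, ?_⟩
  -- compute (Uᵀ)⁻¹
  have hUT : Uᵀ = σ • (Rtᵀ * W⁻¹) := by
    rw [hU, Matrix.transpose_mul, Matrix.transpose_smul, Matrix.transpose_nonsing_inv,
      hWsymm, Matrix.mul_smul]
  have hUTinv : (Uᵀ)⁻¹ = σ⁻¹ • (W * Rt) := by
    apply Matrix.inv_eq_right_inv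
    have h : Rtᵀ * W⁻¹ * (W * Rt) = 1 := by
      calc Rtᵀ * W⁻¹ * (W * Rt) = Rtᵀ * (W⁻¹ * W) * Rt := by simp [Matrix.mul_assoc]
        _ = 1 := by rw [hWinv, Matrix.mul_one, hRt]
    rw [hUT]
    simp [Matrix.smul_mul, Matrix.mul_smul, smul_smul, inv_mul_cancel₀ hσ0, mul_inv_cancel₀ hσ0, h,
      Matrix.mul_assoc]
  -- main computation
  have key : (σ^2)⁻¹ • (Bᵀ * B) * U + U = σ⁻¹ • (W * Rt) := by
    have h1 : (Bᵀ * B + σ^2 • (1 : Matrix (Fin k) (Fin k) ℝ)) * U = σ • (W * Rt) := by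
      rw [← hW, hU, Matrix.smul_mul, Matrix.mul_smul]
      congr 1
      calc W * W * (W⁻¹ * Rt) = W * (W * W⁻¹) * Rt := by simp [Matrix.mul_assoc]
        _ = W * Rt := by rw [hWinv', Matrix.mul_one]
    have h2 : (σ^2)⁻¹ • ((Bᵀ * B + σ^2 • (1 : Matrix (Fin k) (Fin k) ℝ)) * U)
        = (σ^2)⁻¹ • (Bᵀ * B) * U + U := by
      rw [Matrix.add_mul, smul_add, Matrix.smul_mul, Matrix.smul_mul, Matrix.one_mul,
        smul_smul, inv_mul_cancel₀ (by positivity : (σ:ℝ)^2 ≠ 0), one_smul]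
    rw [← h2, h1, smul_smul]
    congr 1
    field_simp
  rw [key, hUTinv, sub_self]
end

section
/- Let A ∈ ℝ^{m×n} have rank m, let G ∈ ℝ^{n×k}, σ > 0, let Y_N ∈ ℝ^{m×m} be symmetric, and set Σ_σ := GᵀAᵀA G + σ² I (positive definite). Then the stationarity equation AᵀA G (σ² I + Σ_σ⁻¹ GᵀAᵀ Y_N A G) Σ_σ⁻¹ = Aᵀ Y_N A G Σ_σ⁻¹ holds if and only if (I_m − A G Σ_σ⁻¹ GᵀAᵀ) Y_N A G = σ² A G. -/
open Matrix

/-- **Reduction of the gradient-in-G stationarity condition.**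
Let `A ∈ ℝ^{m×n}` have rank `m`, `G ∈ ℝ^{n×k}`, `σ > 0`, `Y_N` symmetric, and
`Σ_σ = GᵀAᵀAG + σ²I`. Then
`AᵀA G (σ² I + Σ_σ⁻¹ GᵀAᵀ Y_N A G) Σ_σ⁻¹ = Aᵀ Y_N A G Σ_σ⁻¹`
holds if and only if `(I_m − A G Σ_σ⁻¹ GᵀAᵀ) Y_N A G = σ² A G`. -/
theorem stmt9 {m n k : ℕ} (A : Matrix (Fin m) (Fin n) ℝ) (hA : A.rank = m)
    (G : Matrix (Fin n) (Fin k) ℝ) (σ : ℝ) (hσ : 0 < σ)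
    (YN : Matrix (Fin m) (Fin m) ℝ) (hY : YNᵀ = YN)
    (S : Matrix (Fin k) (Fin k) ℝ)
    (hS : S = Gᵀ * Aᵀ * A * G + σ^2 • (1 : Matrix (Fin k) (Fin k) ℝ)) :
    (Aᵀ * A * G * (σ^2 • (1 : Matrix (Fin k) (Fin k) ℝ)
          + S⁻¹ * (Gᵀ * Aᵀ * YN * (A * G))) * S⁻¹
        = Aᵀ * YN * (A * G) * S⁻¹)
    ↔ ((1 - A * G * S⁻¹ * Gᵀ * Aᵀ) * YN * (A * G) = σ^2 • (A * G)) := by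
  -- S is positive definite, hence invertible
  have hsemi : (Gᵀ * Aᵀ * A * G).PosSemidef := by
    have h := Matrix.posSemidef_conjTranspose_mul_self (A * G)
    rwa [conjTranspose_eq_transpose_of_trivial, transpose_mul,
      ← Matrix.mul_assoc] at h
  have hone : (σ^2 • (1 : Matrix (Fin k) (Fin k) ℝ)).PosDef := by
    rw [smul_one_eq_diagonal]
    exact Matrix.PosDef.diagonal fun i => by positivity
  have hSpd : S.PosDef := hS ▸ Matrix.PosDef.posSemidef_add hsemi hone
  have hSd : IsUnit S.det := hSpd.det_pos.ne'.isUnit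
  have hSS : S⁻¹ * S = 1 := nonsing_inv_mul S hSd
  -- A * Aᵀ is invertible
  have hAAt : IsUnit (A * Aᵀ) := by
    rw [← Matrix.mulVec_surjective_iff_isUnit]
    have hrank : (A * Aᵀ).rank = m := by rw [Matrix.rank_self_mul_transpose, hA]
    have htop : LinearMap.range (A * Aᵀ).mulVecLin = ⊤ := by
      apply Submodule.eq_top_of_finrank_eq
      rw [← Matrix.rank, hrank]
      simp
    intro y
    have : y ∈ LinearMap.range (A * Aᵀ).mulVecLin := htop ▸ Submodule.mem_top
    obtain ⟨x, hx⟩ := this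
    exact ⟨x, hx⟩
  have hAAtd : IsUnit (A * Aᵀ).det := (Matrix.isUnit_iff_isUnit_det _).mp hAAt
  -- cancel S⁻¹ on the right
  have hc : ∀ X Z : Matrix (Fin n) (Fin k) ℝ, X * S⁻¹ = Z * S⁻¹ → X = Z := by
    intro X Z hxz
    have h2 := congrArg (· * S) hxz
    simpa [Matrix.mul_assoc, hSS] using h2
  -- cancel Aᵀ on the left
  have hcancel : ∀ X Z : Matrix (Fin m) (Fin k) ℝ, Aᵀ * X = Aᵀ * Z → X = Z := by
    intro X Z h
    have h2 : (A * Aᵀ)⁻¹ * (A * (Aᵀ * X)) = (A * Aᵀ)⁻¹ * (A * (Aᵀ * Z)) := by rw [h]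
    rwa [← Matrix.mul_assoc A, ← Matrix.mul_assoc _ (A * Aᵀ),
      ← Matrix.mul_assoc A, ← Matrix.mul_assoc _ (A * Aᵀ),
      nonsing_inv_mul _ hAAtd, Matrix.one_mul, Matrix.one_mul] at h2
  set X : Matrix (Fin m) (Fin k) ℝ := A * (G * (S⁻¹ * (Gᵀ * (Aᵀ * (YN * (A * G)))))) with hX
  have eqL : Aᵀ * A * G * (σ^2 • (1 : Matrix (Fin k) (Fin k) ℝ)
      + S⁻¹ * (Gᵀ * Aᵀ * YN * (A * G))) = Aᵀ * (σ^2 • (A * G) + X) := by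
    rw [hX]
    simp only [Matrix.mul_add, Matrix.mul_smul, Matrix.smul_mul, Matrix.mul_one,
      Matrix.mul_assoc]
  have eqR : Aᵀ * YN * (A * G) = Aᵀ * (YN * (A * G)) := Matrix.mul_assoc _ _ _
  have eqT : (1 - A * G * S⁻¹ * Gᵀ * Aᵀ) * YN * (A * G) = YN * (A * G) - X := by
    rw [hX]
    simp only [Matrix.sub_mul, Matrix.one_mul, Matrix.mul_assoc]
  rw [eqL, eqR, eqT]
  constructor
  · intro h
    have h1 := hcancel _ _ (hc _ _ h)
    rw [← h1, add_sub_cancel_right]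
  · intro h
    have hR : YN * (A * G) = σ^2 • (A * G) + X := by
      rw [← h, sub_add_cancel]
    rw [hR]
end

section
/- Let M ∈ ℝ^{m×k}, Y ∈ ℝ^{m×m} symmetric, and σ > 0. Suppose M = E D R where E ∈ ℝ^{m×k} has orthonormal columns, R ∈ ℝ^{k×k} is orthogonal, D = (L − σ² I)^{1/2} for a diagonal L ∈ ℝ^{k×k} with all diagonal entries L_ii ≥ σ², and Y E = E L. Then M satisfies the stationarity equation (I_m − M (MᵀM + σ² I)⁻¹ Mᵀ) Y M = σ² M. -/
open Matrix

/-- **The PCA-type matrix satisfies the stationarity equation.**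
Let `M ∈ ℝ^{m×k}`, `Y ∈ ℝ^{m×m}` symmetric, `σ > 0`. If `M = E D R` with `E`
having orthonormal columns, `R` orthogonal, `D = (L − σ²I)^{1/2}` for diagonal
`L` with entries `≥ σ²`, and `Y E = E L`, then
`(I_m − M (MᵀM + σ²I)⁻¹ Mᵀ) Y M = σ² M`. -/
theorem stmt10 {m k : ℕ} (M : Matrix (Fin m) (Fin k) ℝ)
    (Y : Matrix (Fin m) (Fin m) ℝ) (hY : Yᵀ = Y) (σ : ℝ) (hσ : 0 < σ)
    (E : Matrix (Fin m) (Fin k) ℝ) (hE : Eᵀ * E = 1)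
    (R : Matrix (Fin k) (Fin k) ℝ) (hR : Rᵀ * R = 1)
    (L : Fin k → ℝ) (hL : ∀ i, σ^2 ≤ L i)
    (hM : M = E * Matrix.diagonal (fun i => Real.sqrt (L i - σ^2)) * R)
    (hYE : Y * E = E * Matrix.diagonal L) :
    (1 - M * (Mᵀ * M + σ^2 • (1 : Matrix (Fin k) (Fin k) ℝ))⁻¹ * Mᵀ) * Y * M
      = σ^2 • M := by
  set D : Matrix (Fin k) (Fin k) ℝ :=
    Matrix.diagonal (fun i => Real.sqrt (L i - σ^2)) with hD
  have hRR : R * Rᵀ = 1 := mul_eq_one_comm.mp hR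
  have hLpos : ∀ i, L i ≠ 0 := fun i =>
    ne_of_gt (lt_of_lt_of_le (pow_pos hσ 2) (hL i))
  have hsq : ∀ i, Real.sqrt (L i - σ^2) * Real.sqrt (L i - σ^2) = L i - σ^2 :=
    fun i => Real.mul_self_sqrt (by linarith [hL i])
  have hDD : D * D = Matrix.diagonal (fun i => L i - σ^2) := by
    rw [hD, Matrix.diagonal_mul_diagonal,
      show (fun i => Real.sqrt (L i - σ^2) * Real.sqrt (L i - σ^2))
        = fun i => L i - σ^2 from funext fun i => hsq i]
  have hDt : Dᵀ = D := by rw [hD, Matrix.diagonal_transpose]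
  have hsmul1 : σ^2 • (1 : Matrix (Fin k) (Fin k) ℝ)
      = Matrix.diagonal (fun _ => σ^2) := by
    rw [← Matrix.diagonal_one, ← Matrix.diagonal_smul,
      show (σ^2 • (fun _ : Fin k => (1:ℝ))) = fun _ => σ^2 from
        funext fun i => by simp]
  have hMt : Mᵀ = Rᵀ * D * Eᵀ := by
    rw [hM, Matrix.transpose_mul, Matrix.transpose_mul, hDt, Matrix.mul_assoc]
  have hMtM : Mᵀ * M + σ^2 • (1 : Matrix (Fin k) (Fin k) ℝ)
      = Rᵀ * Matrix.diagonal L * R := by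
    have h1 : Mᵀ * M = Rᵀ * (D * D) * R := by
      rw [hMt, hM]
      calc Rᵀ * D * Eᵀ * (E * D * R) = Rᵀ * D * (Eᵀ * E) * D * R := by
            simp [Matrix.mul_assoc]
        _ = Rᵀ * (D * D) * R := by rw [hE]; simp [Matrix.mul_assoc]
    have h2 : Matrix.diagonal (fun _ : Fin k => σ^2)
        = Rᵀ * Matrix.diagonal (fun _ : Fin k => σ^2) * R := by
      rw [← hsmul1, Matrix.mul_smul, Matrix.smul_mul, mul_one, hR]
    rw [h1, hDD, hsmul1, h2, ← Matrix.add_mul, ← Matrix.mul_add,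
      Matrix.diagonal_add,
      show (fun i => (L i - σ^2) + σ^2) = L from funext fun i => by ring]
  have hinv : (Mᵀ * M + σ^2 • (1 : Matrix (Fin k) (Fin k) ℝ))⁻¹
      = Rᵀ * Matrix.diagonal (fun i => (L i)⁻¹) * R := by
    apply Matrix.inv_eq_right_inv
    rw [hMtM]
    calc Rᵀ * Matrix.diagonal L * R * (Rᵀ * Matrix.diagonal (fun i => (L i)⁻¹) * R)
        = Rᵀ * Matrix.diagonal L * (R * Rᵀ) * Matrix.diagonal (fun i => (L i)⁻¹) * R := by
          simp [Matrix.mul_assoc]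
      _ = Rᵀ * (Matrix.diagonal L * Matrix.diagonal (fun i => (L i)⁻¹)) * R := by
          rw [hRR]; simp [Matrix.mul_assoc]
      _ = 1 := by
          rw [Matrix.diagonal_mul_diagonal,
            show (fun i => L i * (L i)⁻¹) = fun _ : Fin k => (1:ℝ) from
              funext fun i => mul_inv_cancel₀ (hLpos i),
            Matrix.diagonal_one, Matrix.mul_one, hR]
  have hP : M * (Mᵀ * M + σ^2 • (1 : Matrix (Fin k) (Fin k) ℝ))⁻¹ * Mᵀ
      = E * (D * Matrix.diagonal (fun i => (L i)⁻¹) * D) * Eᵀ := by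
    rw [hinv, hMt, hM]
    calc E * D * R * (Rᵀ * Matrix.diagonal (fun i => (L i)⁻¹) * R) * (Rᵀ * D * Eᵀ)
        = E * D * (R * Rᵀ) * Matrix.diagonal (fun i => (L i)⁻¹) * (R * Rᵀ) * D * Eᵀ := by
          simp [Matrix.mul_assoc]
      _ = E * (D * Matrix.diagonal (fun i => (L i)⁻¹) * D) * Eᵀ := by
          rw [hRR]; simp [Matrix.mul_assoc]
  have hYM : Y * M = E * (Matrix.diagonal L * D) * R := by
    rw [hM, ← Matrix.mul_assoc, ← Matrix.mul_assoc, hYE]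
    simp [Matrix.mul_assoc]
  rw [Matrix.sub_mul, Matrix.sub_mul, Matrix.one_mul, hP]
  have key : E * (D * Matrix.diagonal (fun i => (L i)⁻¹) * D) * Eᵀ * Y * M
      = E * (D * Matrix.diagonal (fun i => (L i)⁻¹) * D * Matrix.diagonal L * D) * R := by
    rw [Matrix.mul_assoc _ Y M, hYM]
    calc E * (D * Matrix.diagonal (fun i => (L i)⁻¹) * D) * Eᵀ *
        (E * (Matrix.diagonal L * D) * R)
        = E * (D * Matrix.diagonal (fun i => (L i)⁻¹) * D) * (Eᵀ * E) *
          (Matrix.diagonal L * D) * R := by simp [Matrix.mul_assoc]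
      _ = _ := by rw [hE]; simp [Matrix.mul_assoc]
  rw [key, hYM, ← Matrix.sub_mul, ← Matrix.mul_sub]
  have hdiag : (Matrix.diagonal L * D) -
      (D * Matrix.diagonal (fun i => (L i)⁻¹) * D * Matrix.diagonal L * D)
      = σ^2 • D := by
    have hfun : (fun i => L i * Real.sqrt (L i - σ^2) -
        Real.sqrt (L i - σ^2) * (L i)⁻¹ * Real.sqrt (L i - σ^2) * L i *
        Real.sqrt (L i - σ^2))
        = σ^2 • (fun i => Real.sqrt (L i - σ^2)) := by
      funext i
      have h0 := hsq i
      have h2 : (L i)⁻¹ * L i = 1 := inv_mul_cancel₀ (hLpos i)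
      simp only [Pi.smul_apply, smul_eq_mul]
      linear_combination (-(Real.sqrt (L i - σ^2))^3) * h2 -
        Real.sqrt (L i - σ^2) * h0
    rw [hD]
    simp only [Matrix.diagonal_mul_diagonal, Matrix.diagonal_sub]
    rw [hfun, Matrix.diagonal_smul]
  rw [hdiag, Matrix.mul_smul, Matrix.smul_mul, hM]
end

section
/- Let M ∈ ℝ^{m×k} have full column rank k with smallest singular value σ_k(M) > 0. Then for every σ ≥ 0, the spectral norm bound ‖(MᵀM + σ² I)⁻¹ Mᵀ − (MᵀM)⁻¹ Mᵀ‖ ≤ σ² / σ_k(M)³ holds. -/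
open Matrix

/-- The spectral (ℓ² operator) norm of a real matrix. -/
noncomputable def specNorm {a b : ℕ} (M : Matrix (Fin a) (Fin b) ℝ) : ℝ :=
  ‖LinearMap.toContinuousLinearMap (Matrix.toEuclideanLin M)‖

/-- The Euclidean norm of a vector in `ℝᵃ`. -/
noncomputable def evnorm {a : ℕ} (v : Fin a → ℝ) : ℝ := Real.sqrt (∑ i, v i ^ 2)


lemma evnorm_eq_norm {a : ℕ} (v : Fin a → ℝ) :
    evnorm v = ‖(WithLp.equiv 2 (Fin a → ℝ)).symm v‖ := by
  rw [EuclideanSpace.norm_eq]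
  simp [evnorm, Real.norm_eq_abs, sq_abs]

lemma evnorm_nonneg {a : ℕ} (v : Fin a → ℝ) : 0 ≤ evnorm v := Real.sqrt_nonneg _

lemma evnorm_sq {a : ℕ} (v : Fin a → ℝ) : evnorm v ^ 2 = v ⬝ᵥ v := by
  rw [evnorm, Real.sq_sqrt (by positivity)]
  simp [dotProduct, sq]

lemma dot_le_evnorm {a : ℕ} (v w : Fin a → ℝ) : v ⬝ᵥ w ≤ evnorm v * evnorm w := by
  have := real_inner_le_norm ((WithLp.equiv 2 (Fin a → ℝ)).symm v)
    ((WithLp.equiv 2 (Fin a → ℝ)).symm w)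
  rw [← evnorm_eq_norm, ← evnorm_eq_norm] at this
  simpa [PiLp.inner_apply, dotProduct, mul_comm] using this

lemma evnorm_eq_zero {a : ℕ} {v : Fin a → ℝ} (h : evnorm v = 0) : v = 0 := by
  rw [evnorm_eq_norm] at h
  have := norm_eq_zero.mp h
  simpa using congrArg (WithLp.equiv 2 (Fin a → ℝ)) this

lemma dot_Mt {m k : ℕ} (M : Matrix (Fin m) (Fin k) ℝ) (x : Fin k → ℝ) (y : Fin m → ℝ) :
    x ⬝ᵥ (Mᵀ *ᵥ y) = (M *ᵥ x) ⬝ᵥ y := by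
  rw [dotProduct_mulVec, vecMul_transpose]

lemma evnorm_smul {a : ℕ} (c : ℝ) (v : Fin a → ℝ) : evnorm (c • v) = |c| * evnorm v := by
  rw [evnorm_eq_norm, evnorm_eq_norm, WithLp.equiv_symm_apply, WithLp.toLp_smul, norm_smul, Real.norm_eq_abs]

/-- **Regularized pseudoinverse perturbation bound.**
Let `M ∈ ℝ^{m×k}` have full column rank with smallest singular value
`s = σ_k(M) > 0` (characterized by `s‖x‖ ≤ ‖Mx‖` for all `x`, with equality
attained by some `x ≠ 0`). Then for every `σ ≥ 0`,
`‖(MᵀM + σ²I)⁻¹Mᵀ − (MᵀM)⁻¹Mᵀ‖ ≤ σ²/σ_k(M)³` in spectral norm. -/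
theorem stmt16 {m k : ℕ} (M : Matrix (Fin m) (Fin k) ℝ) (s : ℝ) (hs : 0 < s)
    (hlow : ∀ x : Fin k → ℝ, s * evnorm x ≤ evnorm (M *ᵥ x))
    (hach : ∃ x : Fin k → ℝ, x ≠ 0 ∧ evnorm (M *ᵥ x) = s * evnorm x)
    (σ : ℝ) (hσ : 0 ≤ σ) :
    specNorm ((Mᵀ * M + σ^2 • (1 : Matrix (Fin k) (Fin k) ℝ))⁻¹ * Mᵀ
        - (Mᵀ * M)⁻¹ * Mᵀ)
      ≤ σ^2 / s^3 := by
  set A := Mᵀ * M with hAdef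
  set B := Mᵀ * M + σ^2 • (1 : Matrix (Fin k) (Fin k) ℝ) with hBdef
  have hMinj : ∀ x : Fin k → ℝ, M *ᵥ x = 0 → x = 0 := by
    intro x hx
    have h1 := hlow x
    rw [hx] at h1
    have h0 : evnorm (0 : Fin m → ℝ) = 0 := by simp [evnorm]
    rw [h0] at h1
    have : evnorm x = 0 := le_antisymm (by nlinarith [evnorm_nonneg x]) (evnorm_nonneg x)
    exact evnorm_eq_zero this
  have hdotA : ∀ x : Fin k → ℝ, x ⬝ᵥ (A *ᵥ x) = (M *ᵥ x) ⬝ᵥ (M *ᵥ x) := by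
    intro x
    rw [hAdef, ← mulVec_mulVec, dotProduct_mulVec, vecMul_transpose]
  have hAlow : ∀ x : Fin k → ℝ, s^2 * (x ⬝ᵥ x) ≤ x ⬝ᵥ (A *ᵥ x) := by
    intro x
    rw [hdotA, ← evnorm_sq, ← evnorm_sq]
    have h1 := hlow x
    have h2 := mul_self_le_mul_self (mul_nonneg hs.le (evnorm_nonneg x)) h1
    nlinarith
  have hBlow : ∀ x : Fin k → ℝ, s^2 * (x ⬝ᵥ x) ≤ x ⬝ᵥ (B *ᵥ x) := by
    intro x
    have heq : x ⬝ᵥ (B *ᵥ x) = x ⬝ᵥ (A *ᵥ x) + σ^2 * (x ⬝ᵥ x) := by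
      rw [hBdef, ← hAdef, add_mulVec, dotProduct_add, smul_mulVec, one_mulVec,
        dotProduct_smul, smul_eq_mul]
    rw [heq]
    have h1 := hAlow x
    have h2 : 0 ≤ x ⬝ᵥ x := by rw [← evnorm_sq]; positivity
    nlinarith
  -- invertibility
  have hker : ∀ (C : Matrix (Fin k) (Fin k) ℝ),
      (∀ x : Fin k → ℝ, s^2 * (x ⬝ᵥ x) ≤ x ⬝ᵥ (C *ᵥ x)) → IsUnit C := by
    intro C hC
    refine mulVec_injective_iff_isUnit.mp ?_
    intro x y hxy
    have h0 : C *ᵥ (x - y) = 0 := by rw [mulVec_sub, hxy, sub_self]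
    have h1 := hC (x - y)
    rw [h0, dotProduct_zero] at h1
    have h2 : (x - y) ⬝ᵥ (x - y) = 0 := by
      have h3 : 0 ≤ (x - y) ⬝ᵥ (x - y) := by rw [← evnorm_sq]; positivity
      nlinarith [pow_pos hs 2]
    have h4 : evnorm (x - y) = 0 := by
      have := evnorm_sq (x - y)
      rw [h2] at this
      exact pow_eq_zero_iff (n := 2) (by norm_num) |>.mp this
    have := evnorm_eq_zero h4
    exact sub_eq_zero.mp this
  have hAunit : IsUnit A := hker A hAlow
  have hBunit : IsUnit B := hker B hBlow
  have hAdet : IsUnit A.det := (isUnit_iff_isUnit_det A).mp hAunit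
  have hBdet : IsUnit B.det := (isUnit_iff_isUnit_det B).mp hBunit
  -- bound 1 : ‖B⁻¹ z‖ ≤ ‖z‖ / s²
  have hB1 : ∀ z : Fin k → ℝ, evnorm (B⁻¹ *ᵥ z) ≤ evnorm z / s^2 := by
    intro z
    set w := B⁻¹ *ᵥ z with hw
    have hBw : B *ᵥ w = z := by
      rw [hw, mulVec_mulVec, mul_nonsing_inv B hBdet, one_mulVec]
    have h1 := hBlow w
    rw [hBw] at h1
    have h2 : w ⬝ᵥ z ≤ evnorm w * evnorm z := dot_le_evnorm w z
    rw [← evnorm_sq] at h1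
    rcases eq_or_lt_of_le (evnorm_nonneg w) with h | h
    · rw [← h]; exact div_nonneg (evnorm_nonneg z) (by positivity)
    · rw [le_div_iff₀ (by positivity)]
      have h3 : s^2 * evnorm w ^ 2 ≤ evnorm w * evnorm z := le_trans h1 h2
      nlinarith
  -- bound 2 : ‖A⁻¹ Mᵀ y‖ ≤ ‖y‖ / s
  have hA1 : ∀ y : Fin m → ℝ, evnorm (A⁻¹ *ᵥ (Mᵀ *ᵥ y)) ≤ evnorm y / s := by
    intro y
    set x := A⁻¹ *ᵥ (Mᵀ *ᵥ y) with hx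
    have hAx : A *ᵥ x = Mᵀ *ᵥ y := by
      rw [hx, mulVec_mulVec, mulVec_mulVec, mul_nonsing_inv A hAdet, Matrix.one_mul]
    have h1 : x ⬝ᵥ (A *ᵥ x) = (M *ᵥ x) ⬝ᵥ y := by
      rw [hAx, dot_Mt]
    have h2 : (M *ᵥ x) ⬝ᵥ (M *ᵥ x) = (M *ᵥ x) ⬝ᵥ y := by rw [← hdotA, h1]
    have h3 : (M *ᵥ x) ⬝ᵥ y ≤ evnorm (M *ᵥ x) * evnorm y := dot_le_evnorm _ _
    rw [← h2, ← evnorm_sq] at h3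
    have h4 : evnorm (M *ᵥ x) ≤ evnorm y := by
      rcases eq_or_lt_of_le (evnorm_nonneg (M *ᵥ x)) with h | h
      · rw [← h]; exact evnorm_nonneg y
      · nlinarith
    have h5 := hlow x
    rw [le_div_iff₀ hs]
    calc evnorm x * s = s * evnorm x := mul_comm _ _
      _ ≤ evnorm (M *ᵥ x) := h5
      _ ≤ evnorm y := h4
  -- algebraic identity
  have hABm : A - B = (-(σ^2)) • (1 : Matrix (Fin k) (Fin k) ℝ) := by
    rw [hBdef, ← hAdef, neg_smul]
    abel
  have key : B⁻¹ * Mᵀ - A⁻¹ * Mᵀ = (-(σ^2)) • (B⁻¹ * (A⁻¹ * Mᵀ)) := by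
    have h1 : B⁻¹ * B = 1 := nonsing_inv_mul B hBdet
    have h2 : A * A⁻¹ = 1 := mul_nonsing_inv A hAdet
    have : B⁻¹ * ((A - B) * (A⁻¹ * Mᵀ)) = B⁻¹ * Mᵀ - A⁻¹ * Mᵀ := by
      rw [Matrix.sub_mul, Matrix.mul_sub, ← Matrix.mul_assoc A, h2, Matrix.one_mul,
        ← Matrix.mul_assoc, ← Matrix.mul_assoc, h1, Matrix.one_mul]
    rw [← this, hABm, Matrix.smul_mul, Matrix.one_mul, Matrix.mul_smul]
  -- final bound
  have hvec : ∀ v : Fin m → ℝ,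
      evnorm ((B⁻¹ * Mᵀ - A⁻¹ * Mᵀ) *ᵥ v) ≤ σ^2 / s^3 * evnorm v := by
    intro v
    rw [key, smul_mulVec, evnorm_smul, abs_neg, abs_of_nonneg (by positivity)]
    have e1 : (B⁻¹ * (A⁻¹ * Mᵀ)) *ᵥ v = B⁻¹ *ᵥ (A⁻¹ *ᵥ (Mᵀ *ᵥ v)) := by
      rw [← mulVec_mulVec, ← mulVec_mulVec]
    rw [e1]
    have h1 := hB1 (A⁻¹ *ᵥ (Mᵀ *ᵥ v))
    have h2 := hA1 v
    have h3 : evnorm (B⁻¹ *ᵥ (A⁻¹ *ᵥ (Mᵀ *ᵥ v))) ≤ evnorm v / s / s^2 := by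
      refine le_trans h1 ?_
      exact div_le_div_of_nonneg_right h2 (by positivity)
    calc σ^2 * evnorm (B⁻¹ *ᵥ (A⁻¹ *ᵥ (Mᵀ *ᵥ v)))
        ≤ σ^2 * (evnorm v / s / s^2) := by
          exact mul_le_mul_of_nonneg_left h3 (by positivity)
      _ = σ^2 / s^3 * evnorm v := by ring
  -- operator norm
  rw [specNorm]
  refine ContinuousLinearMap.opNorm_le_bound _ (by positivity) ?_
  intro y
  have hy : ‖y‖ = evnorm (WithLp.equiv 2 (Fin m → ℝ) y) := by
    rw [evnorm_eq_norm, (WithLp.equiv 2 (Fin m → ℝ)).symm_apply_apply]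
  rw [LinearMap.coe_toContinuousLinearMap', toEuclideanLin_apply, ← WithLp.equiv_symm_apply, ← evnorm_eq_norm, hy]
  exact hvec _
end

section
/- Let M ∈ ℝ^{m×k} have full column rank k with singular values σ₁ ≥ … ≥ σ_k > 0. Then for all σ, α ≥ 0, the spectral norm of the difference of regularized pseudoinverses is given exactly by ‖[(MᵀM + σ² I)⁻¹ − (MᵀM + α² I)⁻¹] Mᵀ‖ = max_{1 ≤ i ≤ k} σ_i |σ² − α²| / ((σ_i² + σ²)(σ_i² + α²)). -/
open Matrix

section aux

lemma aux_mulVec_dot {a b : ℕ} (A : Matrix (Fin a) (Fin b) ℝ) (x : Fin b → ℝ) (y : Fin a → ℝ) :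
    (A *ᵥ x) ⬝ᵥ y = x ⬝ᵥ (Aᵀ *ᵥ y) := by
  rw [Matrix.dotProduct_mulVec, Matrix.vecMul_transpose]

lemma aux_inner_symm {n : ℕ} (u v : Fin n → ℝ) :
    (inner ℝ ((WithLp.equiv 2 (Fin n → ℝ)).symm u) ((WithLp.equiv 2 (Fin n → ℝ)).symm v) : ℝ)
      = u ⬝ᵥ v := by
  simp [PiLp.inner_apply, dotProduct, mul_comm]

lemma aux_norm_sq {n : ℕ} (u : Fin n → ℝ) :
    ‖(WithLp.equiv 2 (Fin n → ℝ)).symm u‖ ^ 2 = u ⬝ᵥ u := by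
  rw [← real_inner_self_eq_norm_sq, aux_inner_symm]

lemma aux_iso {a b : ℕ} {A : Matrix (Fin a) (Fin b) ℝ}
    (hA : Aᵀ * A = 1) (x : Fin b → ℝ) :
    ‖(WithLp.equiv 2 (Fin a → ℝ)).symm (A *ᵥ x)‖ = ‖(WithLp.equiv 2 (Fin b → ℝ)).symm x‖ := by
  have h : (A *ᵥ x) ⬝ᵥ (A *ᵥ x) = x ⬝ᵥ x := by
    rw [aux_mulVec_dot, Matrix.mulVec_mulVec, hA, Matrix.one_mulVec]
  have h2 := aux_norm_sq (A *ᵥ x)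
  rw [h, ← aux_norm_sq x] at h2
  rw [← Real.sqrt_sq (norm_nonneg _), ← Real.sqrt_sq
    (norm_nonneg ((WithLp.equiv 2 (Fin b → ℝ)).symm x)), h2]

lemma aux_contr {a b : ℕ} {A : Matrix (Fin a) (Fin b) ℝ}
    (hA : Aᵀ * A = 1) (x : Fin a → ℝ) :
    ‖(WithLp.equiv 2 (Fin b → ℝ)).symm (Aᵀ *ᵥ x)‖ ≤ ‖(WithLp.equiv 2 (Fin a → ℝ)).symm x‖ := by
  set y := Aᵀ *ᵥ x with hy
  have key : ‖(WithLp.equiv 2 (Fin b → ℝ)).symm y‖ ^ 2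
      ≤ ‖(WithLp.equiv 2 (Fin a → ℝ)).symm x‖ * ‖(WithLp.equiv 2 (Fin b → ℝ)).symm y‖ := by
    rw [aux_norm_sq]
    have h1 : y ⬝ᵥ y = x ⬝ᵥ (A *ᵥ y) := by
      conv_lhs => rw [hy, aux_mulVec_dot, Matrix.transpose_transpose]
    rw [h1, ← aux_inner_symm]
    calc (inner ℝ ((WithLp.equiv 2 (Fin a → ℝ)).symm x)
            ((WithLp.equiv 2 (Fin a → ℝ)).symm (A *ᵥ y)) : ℝ)
        ≤ ‖(WithLp.equiv 2 (Fin a → ℝ)).symm x‖ * ‖(WithLp.equiv 2 (Fin a → ℝ)).symm (A *ᵥ y)‖ :=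
          real_inner_le_norm _ _
      _ = ‖(WithLp.equiv 2 (Fin a → ℝ)).symm x‖ * ‖(WithLp.equiv 2 (Fin b → ℝ)).symm y‖ := by
          rw [aux_iso hA]
  nlinarith [norm_nonneg ((WithLp.equiv 2 (Fin b → ℝ)).symm y),
    norm_nonneg ((WithLp.equiv 2 (Fin a → ℝ)).symm x)]

lemma aux_diag {n : ℕ} (f : Fin n → ℝ) (C : ℝ) (hC : ∀ i, |f i| ≤ C) (hC0 : 0 ≤ C)
    (x : Fin n → ℝ) :
    ‖(WithLp.equiv 2 (Fin n → ℝ)).symm (Matrix.diagonal f *ᵥ x)‖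
      ≤ C * ‖(WithLp.equiv 2 (Fin n → ℝ)).symm x‖ := by
  have h2 : ‖(WithLp.equiv 2 (Fin n → ℝ)).symm (Matrix.diagonal f *ᵥ x)‖ ^ 2
      ≤ (C * ‖(WithLp.equiv 2 (Fin n → ℝ)).symm x‖) ^ 2 := by
    rw [aux_norm_sq, mul_pow, aux_norm_sq]
    simp only [dotProduct, Matrix.mulVec_diagonal, Finset.mul_sum]
    apply Finset.sum_le_sum
    intro i _
    have h := hC i
    nlinarith [sq_nonneg (x i), abs_nonneg (f i), sq_abs (f i),
      mul_le_mul h h (abs_nonneg (f i)) hC0]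
  rw [← Real.sqrt_sq (norm_nonneg _), ← Real.sqrt_sq (mul_nonneg hC0 (norm_nonneg _))]
  exact Real.sqrt_le_sqrt h2

lemma aux_toEuclideanLin_equiv_symm {a b : ℕ} (A : Matrix (Fin a) (Fin b) ℝ) (v : Fin b → ℝ) :
    Matrix.toEuclideanLin A ((WithLp.equiv 2 (Fin b → ℝ)).symm v)
      = (WithLp.equiv 2 (Fin a → ℝ)).symm (A *ᵥ v) := rfl

lemma specNorm_sandwich {m k : ℕ} (hk : 0 < k) (V : Matrix (Fin k) (Fin k) ℝ)
    (E : Matrix (Fin m) (Fin k) ℝ) (f : Fin k → ℝ)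
    (hV : Vᵀ * V = 1) (hE : Eᵀ * E = 1) :
    specNorm (V * Matrix.diagonal f * Eᵀ) = ⨆ i, |f i| := by
  haveI : Nonempty (Fin k) := ⟨⟨0, hk⟩⟩
  have hfN : ∀ i, |f i| ≤ ⨆ j, |f j| :=
    fun i => le_ciSup (Set.Finite.bddAbove (Set.finite_range fun j => |f j|)) i
  have hN0 : 0 ≤ ⨆ j, |f j| := le_trans (abs_nonneg _) (hfN ⟨0, hk⟩)
  unfold specNorm
  apply le_antisymm
  · apply ContinuousLinearMap.opNorm_le_bound _ hN0
    intro x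
    rw [LinearMap.coe_toContinuousLinearMap']
    have hx : x = (WithLp.equiv 2 (Fin m → ℝ)).symm (WithLp.equiv 2 (Fin m → ℝ) x) := by simp
    rw [hx, aux_toEuclideanLin_equiv_symm]
    set u := WithLp.equiv 2 (Fin m → ℝ) x with hu
    have hmv : (V * Matrix.diagonal f * Eᵀ) *ᵥ u
        = V *ᵥ (Matrix.diagonal f *ᵥ (Eᵀ *ᵥ u)) := by
      rw [Matrix.mulVec_mulVec, Matrix.mulVec_mulVec]
    rw [hmv, aux_iso hV]
    calc ‖(WithLp.equiv 2 (Fin k → ℝ)).symm (Matrix.diagonal f *ᵥ (Eᵀ *ᵥ u))‖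
        ≤ (⨆ j, |f j|) * ‖(WithLp.equiv 2 (Fin k → ℝ)).symm (Eᵀ *ᵥ u)‖ :=
          aux_diag f _ hfN hN0 _
      _ ≤ (⨆ j, |f j|) * ‖(WithLp.equiv 2 (Fin m → ℝ)).symm u‖ :=
          mul_le_mul_of_nonneg_left (aux_contr hE u) hN0
  · apply ciSup_le
    intro i
    set T := LinearMap.toContinuousLinearMap
      (Matrix.toEuclideanLin (V * Matrix.diagonal f * Eᵀ)) with hT
    set e : Fin k → ℝ := Pi.single i 1 with he
    set x : EuclideanSpace ℝ (Fin m) := (WithLp.equiv 2 (Fin m → ℝ)).symm (E *ᵥ e) with hx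
    have hxnorm : ‖x‖ = 1 := by
      rw [hx, aux_iso hE]
      have h1 : ((WithLp.equiv 2 (Fin k → ℝ)).symm e) = EuclideanSpace.single i (1 : ℝ) := rfl
      rw [h1, EuclideanSpace.norm_single]; norm_num
    have hde : Matrix.diagonal f *ᵥ e = Pi.single i (f i) := by
      funext j
      rw [Matrix.mulVec_diagonal]
      rcases eq_or_ne j i with h | h
      · subst h; simp [he]
      · simp [he, Pi.single_apply, h]
    have happ : T x = (WithLp.equiv 2 (Fin k → ℝ)).symm (V *ᵥ Pi.single i (f i)) := by
      rw [hT, LinearMap.coe_toContinuousLinearMap', hx,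
        aux_toEuclideanLin_equiv_symm]
      congr 1
      rw [Matrix.mulVec_mulVec, Matrix.mul_assoc, hE, Matrix.mul_one,
        ← Matrix.mulVec_mulVec, hde]
    have hTx : ‖T x‖ = |f i| := by
      rw [happ, aux_iso hV]
      have h1 : ((WithLp.equiv 2 (Fin k → ℝ)).symm (Pi.single i (f i)))
          = EuclideanSpace.single i (f i) := rfl
      rw [h1, EuclideanSpace.norm_single, Real.norm_eq_abs]
    calc |f i| = ‖T x‖ := hTx.symm
      _ ≤ ‖T‖ * ‖x‖ := T.le_opNorm x
      _ = ‖T‖ := by rw [hxnorm, mul_one]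

end aux

/-- **Exact spectral norm of the difference of regularized pseudoinverses.**
Let `M ∈ ℝ^{m×k}` have full column rank `k`, with singular value decomposition
`M = E diag(s) Vᵀ` (`E` with orthonormal columns, `V` orthogonal, `s i > 0`).
Then for all `σ, α ≥ 0`,
`‖[(MᵀM + σ²I)⁻¹ − (MᵀM + α²I)⁻¹]Mᵀ‖
  = max_i s_i |σ² − α²| / ((s_i² + σ²)(s_i² + α²))`. -/
theorem stmt18 {m k : ℕ} (hk : 0 < k) (M : Matrix (Fin m) (Fin k) ℝ)
    (E : Matrix (Fin m) (Fin k) ℝ) (V : Matrix (Fin k) (Fin k) ℝ) (s : Fin k → ℝ)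
    (hE : Eᵀ * E = 1) (hV : Vᵀ * V = 1) (hs : ∀ i, 0 < s i)
    (hsvd : M = E * Matrix.diagonal s * Vᵀ)
    (σ α : ℝ) (hσ : 0 ≤ σ) (hα : 0 ≤ α) :
    specNorm (((Mᵀ * M + σ^2 • (1 : Matrix (Fin k) (Fin k) ℝ))⁻¹
          - (Mᵀ * M + α^2 • (1 : Matrix (Fin k) (Fin k) ℝ))⁻¹) * Mᵀ)
      = ⨆ i : Fin k, s i * |σ^2 - α^2| / ((s i ^ 2 + σ^2) * (s i ^ 2 + α^2)) := by
  have hVV : V * Vᵀ = 1 := mul_eq_one_comm.mp hV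
  have hMt : Mᵀ = V * Matrix.diagonal s * Eᵀ := by
    rw [hsvd]; simp [Matrix.transpose_mul, Matrix.mul_assoc]
  have hMM : Mᵀ * M = V * Matrix.diagonal (fun i => s i ^ 2) * Vᵀ := by
    rw [hMt, hsvd]
    have h1 : V * Matrix.diagonal s * Eᵀ * (E * Matrix.diagonal s * Vᵀ)
        = V * (Matrix.diagonal s * (Eᵀ * E) * Matrix.diagonal s) * Vᵀ := by
      simp only [Matrix.mul_assoc]
    rw [h1, hE, Matrix.mul_one, Matrix.diagonal_mul_diagonal]
    congr 1
    congr 1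
    funext i
    ring
  have hreg : ∀ t : ℝ, Mᵀ * M + t ^ 2 • (1 : Matrix (Fin k) (Fin k) ℝ)
      = V * Matrix.diagonal (fun i => s i ^ 2 + t ^ 2) * Vᵀ := by
    intro t
    have hd : Matrix.diagonal (fun i => s i ^ 2 + t ^ 2)
        = Matrix.diagonal (fun i => s i ^ 2) + t ^ 2 • (1 : Matrix (Fin k) (Fin k) ℝ) := by
      rw [Matrix.smul_one_eq_diagonal, ← Matrix.diagonal_add]
    rw [hd, Matrix.mul_add, Matrix.add_mul, ← hMM, Matrix.mul_smul, Matrix.smul_mul,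
      Matrix.mul_one, hVV]
  have hinv : ∀ a : Fin k → ℝ, (∀ i, a i ≠ 0) →
      (V * Matrix.diagonal a * Vᵀ)⁻¹ = V * Matrix.diagonal (fun i => (a i)⁻¹) * Vᵀ := by
    intro a ha
    apply Matrix.inv_eq_right_inv
    have h1 : V * Matrix.diagonal a * Vᵀ * (V * Matrix.diagonal (fun i => (a i)⁻¹) * Vᵀ)
        = V * (Matrix.diagonal a * (Vᵀ * V) * Matrix.diagonal (fun i => (a i)⁻¹)) * Vᵀ := by
      simp only [Matrix.mul_assoc]
    rw [h1, hV, Matrix.mul_one, Matrix.diagonal_mul_diagonal]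
    have h2 : (fun i => a i * (a i)⁻¹) = fun _ : Fin k => (1 : ℝ) := by
      funext i; exact mul_inv_cancel₀ (ha i)
    rw [h2, Matrix.diagonal_one, Matrix.mul_one, hVV]
  have hbσ : ∀ i, s i ^ 2 + σ ^ 2 ≠ 0 := fun i =>
    ne_of_gt (by nlinarith [pow_pos (hs i) 2, sq_nonneg σ])
  have hbα : ∀ i, s i ^ 2 + α ^ 2 ≠ 0 := fun i =>
    ne_of_gt (by nlinarith [pow_pos (hs i) 2, sq_nonneg α])
  set f : Fin k → ℝ := fun i => ((s i ^ 2 + σ ^ 2)⁻¹ - (s i ^ 2 + α ^ 2)⁻¹) * s i with hf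
  have key : ((Mᵀ * M + σ^2 • (1 : Matrix (Fin k) (Fin k) ℝ))⁻¹
          - (Mᵀ * M + α^2 • (1 : Matrix (Fin k) (Fin k) ℝ))⁻¹) * Mᵀ
      = V * Matrix.diagonal f * Eᵀ := by
    rw [hreg σ, hreg α, hinv _ hbσ, hinv _ hbα, hMt]
    rw [← Matrix.sub_mul, ← Matrix.mul_sub]
    have h1 : V * (Matrix.diagonal (fun i => (s i ^ 2 + σ ^ 2)⁻¹)
          - Matrix.diagonal fun i => (s i ^ 2 + α ^ 2)⁻¹) * Vᵀ
          * (V * Matrix.diagonal s * Eᵀ)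
        = V * ((Matrix.diagonal (fun i => (s i ^ 2 + σ ^ 2)⁻¹)
          - Matrix.diagonal fun i => (s i ^ 2 + α ^ 2)⁻¹) * (Vᵀ * V) * Matrix.diagonal s)
          * Eᵀ := by
      simp only [Matrix.mul_assoc]
    rw [h1, hV, Matrix.mul_one, Matrix.diagonal_sub, Matrix.diagonal_mul_diagonal]
  rw [key, specNorm_sandwich hk V E f hV hE]
  apply iSup_congr
  intro i
  have hbσ' : 0 < s i ^ 2 + σ ^ 2 := by nlinarith [pow_pos (hs i) 2, sq_nonneg σ]
  have hbα' : 0 < s i ^ 2 + α ^ 2 := by nlinarith [pow_pos (hs i) 2, sq_nonneg α]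
  have h1 : f i = (α ^ 2 - σ ^ 2) / ((s i ^ 2 + σ ^ 2) * (s i ^ 2 + α ^ 2)) * s i := by
    rw [hf]
    field_simp
    ring
  rw [h1, abs_mul, abs_div, abs_of_pos (hs i), abs_of_pos (mul_pos hbσ' hbα'), abs_sub_comm]
  ring
end
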